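/- arXiv:2605.23735 — 6 statements merged into one kernel-verified Lean document; each statement's English description precedes it below -/
import Mathlib

section
/- If S is a densely defined closed linear operator from H to K and C is a conjugation on K, then the double antilinear adjoint of CS equals CS, i.e., ((CS)^♯)^♯ = CS. -/
open Classical
noncomputable section

variable {H K : Type*}
  [NormedAddCommGroup H] [InnerProductSpace ℂ H] [CompleteSpace H]
  [NormedAddCommGroup K] [InnerProductSpace ℂ K] [CompleteSpace K]

/-- `D` is a complex linear subspace of `H` (as a set). -/
def IsLinSubspace (D : Set H) : Prop :=
  (0 : H) ∈ D ∧ ∀ (a : ℂ) (x y : H), x ∈ D → y ∈ D → a • x + y ∈ D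

/-- `f` is (complex) linear on `D`. -/
def LinearOn (D : Set H) (f : H → K) : Prop :=
  ∀ (a : ℂ) (x y : H), x ∈ D → y ∈ D → f (a • x + y) = a • f x + f y

/-- `f` is antilinear (conjugate-linear) on `D`. -/
def AntilinearOn (D : Set H) (f : H → K) : Prop :=
  ∀ (a : ℂ) (x y : H), x ∈ D → y ∈ D → f (a • x + y) = (starRingEnd ℂ a) • f x + f y

/-- The operator with domain `D` given by `f` has closed graph, i.e. is a closed operator. -/
def HasClosedGraph (D : Set H) (f : H → K) : Prop :=
  IsClosed {p : H × K | p.1 ∈ D ∧ f p.1 = p.2}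

/-- `C` is a conjugation on `K`: an isometric antilinear involution. -/
def IsConjugation (C : K → K) : Prop :=
  (∀ (a : ℂ) (x y : K), C (a • x + y) = (starRingEnd ℂ a) • C x + C y) ∧
  (∀ x, C (C x) = x) ∧
  ∀ x y : K, (inner ℂ (C x) (C y) : ℂ) = inner ℂ y x

/-- Domain of the (linear) Hilbert space adjoint of the operator `(D, f)`. -/
def adjDom (D : Set H) (f : H → K) : Set K :=
  {y | ∃ u : H, ∀ x ∈ D, (inner ℂ (f x) y : ℂ) = inner ℂ x u}

/-- The (linear) Hilbert space adjoint of the operator `(D, f)`; `0` outside its domain.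
For a densely defined operator the vector `u` below is unique. -/
def adjFun (D : Set H) (f : H → K) : K → H := fun y =>
  if h : ∃ u : H, ∀ x ∈ D, (inner ℂ (f x) y : ℂ) = inner ℂ x u then h.choose else 0

/-- Domain of the antilinear adjoint `T^♯` of the operator `(D, f)`:
`y ∈ D(T^♯)` iff there is `u` with `conj ⟪f x, y⟫ = ⟪x, u⟫` for all `x ∈ D`. -/
def sharpDom (D : Set H) (f : H → K) : Set K :=
  {y | ∃ u : H, ∀ x ∈ D, (starRingEnd ℂ) (inner ℂ (f x) y : ℂ) = inner ℂ x u}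

/-- The antilinear adjoint `T^♯`; `0` outside its domain.
For a densely defined operator the vector `u` below is unique. -/
def sharpFun (D : Set H) (f : H → K) : K → H := fun y =>
  if h : ∃ u : H, ∀ x ∈ D, (starRingEnd ℂ) (inner ℂ (f x) y : ℂ) = inner ℂ x u then h.choose
  else 0

/-- Orthogonal complement (as a set) of a set. -/
def perpSet (S : Set K) : Set K := {y | ∀ z ∈ S, (inner ℂ z y : ℂ) = 0}


private lemma inner_unique' {DS : Set H} (hdense : Dense DS) {u v : H}
    (h : ∀ x ∈ DS, (inner ℂ x u : ℂ) = inner ℂ x v) : u = v := by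
  have h1 : Continuous fun x : H => (inner ℂ x u : ℂ) := continuous_id.inner continuous_const
  have h2 : Continuous fun x : H => (inner ℂ x v : ℂ) := continuous_id.inner continuous_const
  have heq := Continuous.ext_on hdense h1 h2 h
  exact ext_inner_left ℂ fun w => congrFun heq w

private lemma sharpFun_spec {D : Set H} {f : H → K} {y : K} (hy : y ∈ sharpDom D f) :
    ∀ x ∈ D, (starRingEnd ℂ) (inner ℂ (f x) y : ℂ) = inner ℂ x (sharpFun D f y) := by
  have hy' : ∃ u : H, ∀ x ∈ D, (starRingEnd ℂ) (inner ℂ (f x) y : ℂ) = inner ℂ x u := hy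
  intro x hx
  rw [sharpFun, dif_pos hy']
  exact hy'.choose_spec x hx

private lemma graph_key (DS : Set H) (S : H → K)
    (hsub : IsLinSubspace DS) (hlin : LinearOn DS S)
    (hclosed : HasClosedGraph DS S) (x : H) (w : K)
    (hx : ∀ z : K, ∀ h : H, (∀ x' ∈ DS, (inner ℂ (S x') z : ℂ) = inner ℂ x' h) →
      (inner ℂ h x : ℂ) = inner ℂ z w) :
    x ∈ DS ∧ S x = w := by
  have hS0 : S 0 = 0 := by
    have h := hlin 1 0 0 hsub.1 hsub.1
    simp only [one_smul, add_zero] at h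
    exact (left_eq_add.mp h)
  set G : Submodule ℂ (WithLp 2 (H × K)) :=
    { carrier := {p | p.fst ∈ DS ∧ S p.fst = p.snd}
      add_mem' := by
        rintro a b ⟨ha1, ha2⟩ ⟨hb1, hb2⟩
        constructor
        · have := hsub.2 1 a.fst b.fst ha1 hb1
          simpa using this
        · show S (a.fst + b.fst) = a.snd + b.snd
          have h1 : a.fst + b.fst = (1:ℂ) • a.fst + b.fst := by rw [one_smul]
          rw [h1, hlin 1 a.fst b.fst ha1 hb1, one_smul, ha2, hb2]
      zero_mem' := ⟨hsub.1, hS0⟩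
      smul_mem' := by
        rintro c a ⟨ha1, ha2⟩
        constructor
        · have := hsub.2 c a.fst 0 ha1 hsub.1
          simpa using this
        · show S (c • a.fst) = c • a.snd
          have h1 : c • a.fst = c • a.fst + 0 := by rw [add_zero]
          rw [h1, hlin c a.fst 0 ha1 hsub.1, hS0, add_zero, ha2] } with hGdef
  have hGclosed : IsClosed (G : Set (WithLp 2 (H × K))) := hclosed.preimage (WithLp.prod_continuous_ofLp 2 H K)
  haveI : CompleteSpace G := hGclosed.completeSpace_coe
  have hGG : Gᗮᗮ = G := Submodule.orthogonal_orthogonal G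
  have hmem : WithLp.toLp 2 (x, w) ∈ Gᗮᗮ := by
    rw [Submodule.mem_orthogonal]
    intro q hq
    rw [Submodule.mem_orthogonal] at hq
    have hqA : ∀ x' ∈ DS, (inner ℂ (S x') q.snd : ℂ) = inner ℂ x' (-q.fst) := by
      intro x' hx'
      have hmemG : WithLp.toLp 2 (x', S x') ∈ G := ⟨hx', rfl⟩
      have h0 := hq _ hmemG
      rw [WithLp.prod_inner_apply] at h0
      simp only [WithLp.ofLp_toLp, WithLp.ofLp_fst, WithLp.ofLp_snd] at h0
      rw [inner_neg_right]
      linear_combination h0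
    have h1 := hx q.snd (-q.fst) hqA
    rw [inner_neg_left] at h1
    rw [WithLp.prod_inner_apply]
    show (inner ℂ q.fst x : ℂ) + inner ℂ q.snd w = 0
    linear_combination -h1
  rw [hGG] at hmem
  exact hmem

/-- For `S` densely defined closed linear from `H` to `K` and `C` a
conjugation on `K`, the double antilinear adjoint of `CS` equals `CS`. -/
theorem double_sharp_eq_self
    (DS : Set H) (S : H → K) (C : K → K)
    (hsub : IsLinSubspace DS) (hlin : LinearOn DS S) (hdense : Dense DS)
    (hclosed : HasClosedGraph DS S) (hC : IsConjugation C) :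
    sharpDom (sharpDom DS (fun x => C (S x))) (sharpFun DS (fun x => C (S x))) = DS ∧
    ∀ x ∈ DS,
      sharpFun (sharpDom DS (fun x => C (S x))) (sharpFun DS (fun x => C (S x))) x
        = C (S x) := by
  have hCC : ∀ x : K, C (C x) = x := hC.2.1
  have hCi : ∀ x y : K, (inner ℂ (C x) (C y) : ℂ) = inner ℂ y x := hC.2.2
  have hconj : ∀ a y : K, (starRingEnd ℂ) (inner ℂ (C a) y : ℂ) = inner ℂ a (C y) := by
    intro a y
    have h1 : (inner ℂ (C a) y : ℂ) = inner ℂ (C y) a := by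
      conv_lhs => rw [← hCC y]
      exact hCi a (C y)
    rw [h1, inner_conj_symm]
  have hD' : ∀ y : K, y ∈ sharpDom DS (fun x => C (S x)) ↔
      ∃ u : H, ∀ x ∈ DS, (inner ℂ (S x) (C y) : ℂ) = inner ℂ x u := by
    intro y
    constructor
    · rintro ⟨u, hu⟩
      exact ⟨u, fun x hx => by rw [← hu x hx, hconj]⟩
    · rintro ⟨u, hu⟩
      exact ⟨u, fun x hx => by rw [hconj]; exact hu x hx⟩
  have hf' : ∀ y ∈ sharpDom DS (fun x => C (S x)), ∀ x ∈ DS,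
      (inner ℂ (S x) (C y) : ℂ) = inner ℂ x (sharpFun DS (fun x => C (S x)) y) := by
    intro y hy x hx
    have := sharpFun_spec hy x hx
    rw [← this, hconj]
  have main : ∀ (x : H) (u : K),
      (∀ y ∈ sharpDom DS (fun x => C (S x)),
        (starRingEnd ℂ) (inner ℂ (sharpFun DS (fun x => C (S x)) y) x : ℂ) = inner ℂ y u) →
      x ∈ DS ∧ S x = C u := by
    intro x u hu
    apply graph_key DS S hsub hlin hclosed x (C u)
    intro z h' hzh
    have hCz : C z ∈ sharpDom DS (fun x => C (S x)) := by
      rw [hD']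
      exact ⟨h', fun x' hx' => by rw [hCC z]; exact hzh x' hx'⟩
    have h2 : sharpFun DS (fun x => C (S x)) (C z) = h' := by
      refine (inner_unique' hdense fun x' hx' => ?_).symm
      have h1 := hf' (C z) hCz x' hx'
      rw [hCC z] at h1
      rw [← h1]
      exact (hzh x' hx').symm
    have h3 := hu (C z) hCz
    rw [h2] at h3
    rw [← hconj z u, ← h3, Complex.conj_conj]
  have back : ∀ x ∈ DS, ∀ y ∈ sharpDom DS (fun x => C (S x)),
      (starRingEnd ℂ) (inner ℂ (sharpFun DS (fun x => C (S x)) y) x : ℂ)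
        = inner ℂ y (C (S x)) := by
    intro x hx y hy
    rw [inner_conj_symm, ← hf' y hy x hx]
    conv_rhs => rw [← hCC y]
    exact (hCi (C y) (S x)).symm
  constructor
  · ext x
    constructor
    · rintro ⟨u, hu⟩
      exact (main x u hu).1
    · intro hx
      exact ⟨C (S x), back x hx⟩
  · intro x hx
    have hmem : x ∈ sharpDom (sharpDom DS (fun x => C (S x)))
        (sharpFun DS (fun x => C (S x))) := ⟨C (S x), back x hx⟩
    have hval := sharpFun_spec hmem
    have h4 := (main x _ hval).2
    rw [h4, hCC]
end
end

section
/- If S is a densely defined closed linear operator from H to K and C is a conjugation on K, then (CS)(CS)^♯ = CSS*C is a positive self-adjoint (linear) operator on K; in particular D(SS*C) is dense and (CSS*C)* = CSS*C. -/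
open Classical
noncomputable section

variable {H K : Type*}
  [NormedAddCommGroup H] [InnerProductSpace ℂ H] [CompleteSpace H]
  [NormedAddCommGroup K] [InnerProductSpace ℂ K] [CompleteSpace K]

set_option linter.unusedSectionVars false
set_option maxHeartbeats 1000000

theorem dense_unique {s : Set H} (hd : Dense s) {u v : H}
    (h : ∀ x ∈ s, (inner ℂ x u : ℂ) = inner ℂ x v) : u = v := by
  have key : ∀ x : H, (inner ℂ x (u - v) : ℂ) = 0 := by
    have hc : Continuous fun x : H => (inner ℂ x (u - v) : ℂ) :=
      continuous_id.inner continuous_const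
    have h0 : ∀ x ∈ s, (inner ℂ x (u - v) : ℂ) = 0 := by
      intro x hx; rw [inner_sub_right, h x hx]; ring
    intro x
    exact congrFun (Continuous.ext_on hd hc continuous_const (fun y hy => h0 y hy)) x
  have := key (u - v)
  rw [inner_self_eq_zero] at this
  exact sub_eq_zero.mp this

theorem adjFun_spec (DS : Set H) (S : H → K) {y : K} (hy : y ∈ adjDom DS S) :
    ∀ x ∈ DS, (inner ℂ (S x) y : ℂ) = inner ℂ x (adjFun DS S y) := by
  rw [adjDom, Set.mem_setOf_eq] at hy
  rw [adjFun, dif_pos hy]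
  exact hy.choose_spec

theorem adjFun_eq (DS : Set H) (S : H → K) (hdense : Dense DS) {y : K} {u : H}
    (hu : ∀ x ∈ DS, (inner ℂ (S x) y : ℂ) = inner ℂ x u) : adjFun DS S y = u := by
  have hy : y ∈ adjDom DS S := ⟨u, hu⟩
  refine dense_unique hdense (fun x hx => ?_)
  rw [← adjFun_spec DS S hy x hx, hu x hx]

/-- domain of SS* -/
def dom2 (DS : Set H) (S : H → K) : Set K :=
  {y : K | y ∈ adjDom DS S ∧ adjFun DS S y ∈ DS}

theorem S_zero (DS : Set H) (S : H → K) (hsub : IsLinSubspace DS) (hlin : LinearOn DS S) :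
    S 0 = 0 := by
  have h := hlin 1 0 0 hsub.1 hsub.1
  simp only [one_smul, smul_zero, add_zero] at h
  have : S 0 + S 0 = S 0 + 0 := by rw [add_zero]; exact h.symm
  exact (add_left_cancel this)

theorem adjFun_zero (DS : Set H) (S : H → K) (hdense : Dense DS) :
    (0 : K) ∈ adjDom DS S ∧ adjFun DS S 0 = 0 := by
  have h : ∀ x ∈ DS, (inner ℂ (S x) (0 : K) : ℂ) = inner ℂ x (0 : H) := by
    intro x hx; simp
  exact ⟨⟨0, h⟩, adjFun_eq DS S hdense h⟩

theorem adjDom_combo (DS : Set H) (S : H → K) (hdense : Dense DS)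
    (a : ℂ) {y y' : K} (hy : y ∈ adjDom DS S) (hy' : y' ∈ adjDom DS S) :
    (a • y + y') ∈ adjDom DS S ∧
      adjFun DS S (a • y + y') = a • adjFun DS S y + adjFun DS S y' := by
  have h : ∀ x ∈ DS, (inner ℂ (S x) (a • y + y') : ℂ)
      = inner ℂ x (a • adjFun DS S y + adjFun DS S y') := by
    intro x hx
    rw [inner_add_right, inner_smul_right, adjFun_spec DS S hy x hx,
      adjFun_spec DS S hy' x hx, inner_add_right, inner_smul_right]
  exact ⟨⟨_, h⟩, adjFun_eq DS S hdense h⟩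

/-- The graph of `S` as a closed submodule of the L² product. -/
def graphSub (DS : Set H) (S : H → K) (hsub : IsLinSubspace DS) (hlin : LinearOn DS S) :
    Submodule ℂ (WithLp 2 (H × K)) where
  carrier := {p | p.fst ∈ DS ∧ S p.fst = p.snd}
  zero_mem' := ⟨hsub.1, by simpa using S_zero DS S hsub hlin⟩
  add_mem' := by
    rintro p q ⟨hp1, hp2⟩ ⟨hq1, hq2⟩
    constructor
    · have := hsub.2 1 p.fst q.fst hp1 hq1
      simpa using this
    · have := hlin 1 p.fst q.fst hp1 hq1
      simp only [one_smul] at this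
      show S (p.fst + q.fst) = p.snd + q.snd
      rw [this, hp2, hq2]
  smul_mem' := by
    rintro a p ⟨hp1, hp2⟩
    constructor
    · have := hsub.2 a p.fst 0 hp1 hsub.1
      simpa using this
    · have := hlin a p.fst 0 hp1 hsub.1
      simp only [add_zero, S_zero DS S hsub hlin] at this
      show S (a • p.fst) = a • p.snd
      rw [this, hp2]

theorem graphSub_closed (DS : Set H) (S : H → K) (hsub : IsLinSubspace DS)
    (hlin : LinearOn DS S) (hclosed : HasClosedGraph DS S) :
    IsClosed ((graphSub DS S hsub hlin : Submodule ℂ (WithLp 2 (H × K))) : Set (WithLp 2 (H × K))) := by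
  have : ((graphSub DS S hsub hlin : Submodule ℂ (WithLp 2 (H × K))) : Set (WithLp 2 (H × K)))
      = (WithLp.prodContinuousLinearEquiv 2 ℂ H K) ⁻¹' {p : H × K | p.1 ∈ DS ∧ S p.1 = p.2} :=
    rfl
  rw [this]
  exact hclosed.preimage (WithLp.prodContinuousLinearEquiv 2 ℂ H K).continuous

theorem vonNeumann_surj (DS : Set H) (S : H → K) (hsub : IsLinSubspace DS)
    (hlin : LinearOn DS S) (hdense : Dense DS) (hclosed : HasClosedGraph DS S) :
    ∀ z : K, ∃ y ∈ dom2 DS S, y + S (adjFun DS S y) = z := by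
  intro z
  set G := graphSub DS S hsub hlin with hG
  haveI : CompleteSpace G := (graphSub_closed DS S hsub hlin hclosed).completeSpace_coe
  set w : WithLp 2 (H × K) := (WithLp.equiv 2 (H × K)).symm (0, z) with hwdef
  obtain ⟨g, hg, h, hh, hw⟩ := G.exists_add_mem_mem_orthogonal w
  obtain ⟨hg1, hg2⟩ := hg
  -- coordinates
  have hfst : (0 : H) = g.fst + h.fst := congrArg WithLp.fst hw
  have hsnd : z = g.snd + h.snd := congrArg WithLp.snd hw
  have horth : ∀ x ∈ DS, (inner ℂ (S x) h.snd : ℂ) = inner ℂ x g.fst := by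
    intro x hx
    have hmem : ((WithLp.equiv 2 (H × K)).symm (x, S x)) ∈ G := ⟨hx, rfl⟩
    have := (Submodule.mem_orthogonal G h).mp hh _ hmem
    rw [WithLp.prod_inner_apply] at this
    have hx0 : h.fst = -g.fst := eq_neg_of_add_eq_zero_right hfst.symm
    have h1 : ((WithLp.equiv 2 (H × K)).symm (x, S x)).fst = x := rfl
    have h2 : ((WithLp.equiv 2 (H × K)).symm (x, S x)).snd = S x := rfl
    change inner ℂ x h.fst + inner ℂ (S x) h.snd = 0 at this
    rw [hx0, inner_neg_right] at this
    linear_combination this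
  have hmemadj : h.snd ∈ adjDom DS S := ⟨g.fst, horth⟩
  have hadj : adjFun DS S h.snd = g.fst := adjFun_eq DS S hdense horth
  refine ⟨h.snd, ⟨hmemadj, hadj ▸ hg1⟩, ?_⟩
  rw [hadj, hg2, hsnd]
  exact add_comm _ _

theorem sym_lemma (DS : Set H) (S : H → K) {y y' : K}
    (hy : adjFun DS S y ∈ DS) (hy' : y' ∈ adjDom DS S) :
    (inner ℂ (S (adjFun DS S y)) y' : ℂ) = inner ℂ (adjFun DS S y) (adjFun DS S y') :=
  adjFun_spec DS S hy' _ hy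

theorem sym_lemma' (DS : Set H) (S : H → K) {y y' : K}
    (hy : y ∈ adjDom DS S) (hy' : adjFun DS S y' ∈ DS) :
    (inner ℂ y (S (adjFun DS S y')) : ℂ) = inner ℂ (adjFun DS S y) (adjFun DS S y') := by
  rw [← inner_conj_symm, sym_lemma DS S hy' hy, inner_conj_symm]

/-- `dom2` as a submodule -/
def dom2Sub (DS : Set H) (S : H → K) (hsub : IsLinSubspace DS) (hdense : Dense DS) :
    Submodule ℂ K where
  carrier := dom2 DS S
  zero_mem' := ⟨(adjFun_zero DS S hdense).1, by
    rw [(adjFun_zero DS S hdense).2]; exact hsub.1⟩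
  add_mem' := by
    rintro y y' ⟨hy1, hy2⟩ ⟨hy1', hy2'⟩
    have h := adjDom_combo DS S hdense 1 hy1 hy1'
    simp only [one_smul] at h
    exact ⟨h.1, by rw [h.2]; simpa using hsub.2 1 _ _ hy2 hy2'⟩
  smul_mem' := by
    rintro a y ⟨hy1, hy2⟩
    have h := adjDom_combo DS S hdense a hy1 (adjFun_zero DS S hdense).1
    simp only [(adjFun_zero DS S hdense).2, add_zero] at h
    exact ⟨h.1, by rw [h.2]; simpa using hsub.2 a _ 0 hy2 hsub.1⟩

theorem dom2_dense (DS : Set H) (S : H → K) (hsub : IsLinSubspace DS)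
    (hlin : LinearOn DS S) (hdense : Dense DS) (hclosed : HasClosedGraph DS S) :
    Dense (dom2 DS S) := by
  have : Dense ((dom2Sub DS S hsub hdense : Submodule ℂ K) : Set K) := by
    rw [Submodule.dense_iff_topologicalClosure_eq_top,
      Submodule.topologicalClosure_eq_top_iff]
    rw [Submodule.eq_bot_iff]
    intro z hz
    obtain ⟨y, hy, hyz⟩ := vonNeumann_surj DS S hsub hlin hdense hclosed z
    have h0 : (inner ℂ y z : ℂ) = 0 :=
      (Submodule.mem_orthogonal _ z).mp hz y hy
    rw [← hyz, inner_add_right, sym_lemma' DS S hy.1 hy.2,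
      inner_self_eq_norm_sq_to_K, inner_self_eq_norm_sq_to_K] at h0
    have hre : (‖y‖ ^ 2 + ‖adjFun DS S y‖ ^ 2 : ℝ) = 0 := by
      norm_cast at h0
      rwa [RCLike.ofReal_eq_zero] at h0
    have hy0 : y = 0 := by
      have h1 : ‖y‖ ^ 2 = 0 := by nlinarith [sq_nonneg ‖y‖, sq_nonneg ‖adjFun DS S y‖]
      simpa [pow_eq_zero_iff] using h1
    have hu0 : adjFun DS S y = 0 := by
      rw [hy0, (adjFun_zero DS S hdense).2]
    rw [← hyz, hu0, S_zero DS S hsub hlin, add_zero]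
    exact hy0
  exact this

theorem dom2_symm (DS : Set H) (S : H → K) {y y' : K}
    (hy : y ∈ dom2 DS S) (hy' : y' ∈ dom2 DS S) :
    (inner ℂ (S (adjFun DS S y)) y' : ℂ) = inner ℂ y (S (adjFun DS S y')) := by
  rw [sym_lemma DS S hy.2 hy'.1, sym_lemma' DS S hy.1 hy'.2]

theorem T2_selfadj (DS : Set H) (S : H → K) (hsub : IsLinSubspace DS)
    (hlin : LinearOn DS S) (hdense : Dense DS) (hclosed : HasClosedGraph DS S) :
    adjDom (dom2 DS S) (fun y => S (adjFun DS S y)) = dom2 DS S ∧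
    ∀ y' ∈ dom2 DS S,
      adjFun (dom2 DS S) (fun y => S (adjFun DS S y)) y' = S (adjFun DS S y') := by
  have hd2 : Dense (dom2 DS S) := dom2_dense DS S hsub hlin hdense hclosed
  constructor
  · apply Set.Subset.antisymm
    · rintro y' ⟨u, hu⟩
      -- y' ∈ adjDom; show y' ∈ dom2
      obtain ⟨y₀, hy₀, hy₀eq⟩ := vonNeumann_surj DS S hsub hlin hdense hclosed (y' + u)
      have key : ∀ v : K, (inner ℂ v y' : ℂ) = inner ℂ v y₀ := by
        intro v
        obtain ⟨y, hy, hyv⟩ := vonNeumann_surj DS S hsub hlin hdense hclosed v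
        have e1 : (inner ℂ (y + S (adjFun DS S y)) y' : ℂ) = inner ℂ y (y' + u) := by
          rw [inner_add_left, inner_add_right, hu y hy]
        have e2 : (inner ℂ y (y' + u) : ℂ) = inner ℂ (y + S (adjFun DS S y)) y₀ := by
          rw [← hy₀eq, inner_add_right, inner_add_left,
            ← dom2_symm DS S hy hy₀]
        rw [← hyv, e1, e2]
      have : y' = y₀ := ext_inner_left ℂ key
      rw [this]; exact hy₀
    · rintro y' hy'
      exact ⟨S (adjFun DS S y'), fun y hy => dom2_symm DS S hy hy'⟩
  · intro y' hy'
    exact adjFun_eq (dom2 DS S) _ hd2 (fun y hy => dom2_symm DS S hy hy')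

section conj
variable (C : K → K) (hC : IsConjugation C)

theorem conj_zero (hC : IsConjugation C) : C 0 = 0 := by
  have h := hC.1 1 0 0
  simp only [one_smul, smul_zero, add_zero, map_one] at h
  have : C 0 + C 0 = C 0 + 0 := by rw [add_zero]; exact h.symm
  exact add_left_cancel this

theorem conj_sub (hC : IsConjugation C) (x y : K) : C (x - y) = C x - C y := by
  have h := hC.1 (-1) y x
  have e : (-1 : ℂ) • y + x = x - y := by
    rw [neg_one_smul]; abel
  rw [e] at h
  rw [h]
  simp only [map_neg, map_one, neg_smul, one_smul]
  abel

theorem conj_norm (hC : IsConjugation C) (x : K) : ‖C x‖ = ‖x‖ := by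
  have h := hC.2.2 x x
  rw [inner_self_eq_norm_sq_to_K, inner_self_eq_norm_sq_to_K] at h
  norm_cast at h
  nlinarith [norm_nonneg (C x), norm_nonneg x, sq_nonneg (‖C x‖ - ‖x‖)]

theorem conj_continuous (hC : IsConjugation C) : Continuous C := by
  have : Isometry C := by
    intro x y
    rw [edist_dist, edist_dist, dist_eq_norm, dist_eq_norm, ← conj_sub C hC,
      conj_norm C hC]
  exact this.continuous

theorem conj_preimage_dense (hC : IsConjugation C) {s : Set K} (hs : Dense s) :
    Dense (C ⁻¹' s) := by
  let homeo : Homeomorph K K :=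
    { toFun := C, invFun := C, left_inv := hC.2.1, right_inv := hC.2.1,
      continuous_toFun := conj_continuous C hC,
      continuous_invFun := conj_continuous C hC }
  rw [dense_iff_closure_eq]
  have : C ⁻¹' s = homeo ⁻¹' s := rfl
  rw [this, ← Homeomorph.preimage_closure, dense_iff_closure_eq.mp hs, Set.preimage_univ]

theorem conj_inner_swap (hC : IsConjugation C) (a b : K) :
    (inner ℂ (C a) b : ℂ) = inner ℂ (C b) a := by
  conv_lhs => rw [← hC.2.1 b]
  exact hC.2.2 a (C b)

end conj


/-- For `S` densely defined closed linear from `H` to `K` and `C` a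
conjugation on `K`, the linear operator `(CS)(CS)^♯ = CSS*C` (with its natural composition
domain) is densely defined, self-adjoint and positive. -/
theorem CSSstarC_positive_selfAdjoint
    (DS : Set H) (S : H → K) (C : K → K)
    (hsub : IsLinSubspace DS) (hlin : LinearOn DS S) (hdense : Dense DS)
    (hclosed : HasClosedGraph DS S) (hC : IsConjugation C) :
    Dense {y : K | C y ∈ adjDom DS S ∧ adjFun DS S (C y) ∈ DS} ∧
    adjDom {y : K | C y ∈ adjDom DS S ∧ adjFun DS S (C y) ∈ DS}
        (fun y => C (S (adjFun DS S (C y))))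
      = {y : K | C y ∈ adjDom DS S ∧ adjFun DS S (C y) ∈ DS} ∧
    (∀ y ∈ {y : K | C y ∈ adjDom DS S ∧ adjFun DS S (C y) ∈ DS},
      adjFun {y : K | C y ∈ adjDom DS S ∧ adjFun DS S (C y) ∈ DS}
        (fun y => C (S (adjFun DS S (C y)))) y = C (S (adjFun DS S (C y)))) ∧
    ∀ y ∈ {y : K | C y ∈ adjDom DS S ∧ adjFun DS S (C y) ∈ DS},
      0 ≤ (inner ℂ (C (S (adjFun DS S (C y)))) y : ℂ).re ∧
      (inner ℂ (C (S (adjFun DS S (C y)))) y : ℂ).im = 0 := by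
  set D0 : Set K := {y : K | C y ∈ adjDom DS S ∧ adjFun DS S (C y) ∈ DS} with hD0
  have hD0mem : ∀ y : K, y ∈ D0 ↔ C y ∈ dom2 DS S := fun y => Iff.rfl
  have hdense2 : Dense (dom2 DS S) := dom2_dense DS S hsub hlin hdense hclosed
  have hdenseD0 : Dense D0 := by
    have : D0 = C ⁻¹' (dom2 DS S) := rfl
    rw [this]
    exact conj_preimage_dense C hC hdense2
  have conjSym : ∀ y ∈ D0, ∀ y' ∈ D0,
      (inner ℂ (C (S (adjFun DS S (C y)))) y' : ℂ)
        = inner ℂ y (C (S (adjFun DS S (C y')))) := by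
    intro y hy y' hy'
    calc (inner ℂ (C (S (adjFun DS S (C y)))) y' : ℂ)
        = inner ℂ (C y') (S (adjFun DS S (C y))) := conj_inner_swap C hC _ _
      _ = (starRingEnd ℂ) (inner ℂ (S (adjFun DS S (C y))) (C y')) :=
          (inner_conj_symm _ _).symm
      _ = (starRingEnd ℂ) (inner ℂ (C y) (S (adjFun DS S (C y')))) := by
          rw [dom2_symm DS S hy hy']
      _ = (starRingEnd ℂ) (inner ℂ (C (S (adjFun DS S (C y')))) y) := by
          rw [conj_inner_swap C hC (S (adjFun DS S (C y'))) y]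
      _ = inner ℂ y (C (S (adjFun DS S (C y')))) := inner_conj_symm _ _
  refine ⟨hdenseD0, ?_, ?_, ?_⟩
  · apply Set.Subset.antisymm
    · rintro y' ⟨u, hu⟩
      rw [hD0mem, ← (T2_selfadj DS S hsub hlin hdense hclosed).1]
      refine ⟨C u, fun x hx => ?_⟩
      have hmem : C x ∈ D0 := by
        rw [hD0mem, hC.2.1]; exact hx
      have h : (inner ℂ (C (S (adjFun DS S (C (C x))))) y' : ℂ) = inner ℂ (C x) u :=
        hu (C x) hmem
      rw [hC.2.1 x] at h
      show (inner ℂ (S (adjFun DS S x)) (C y') : ℂ) = inner ℂ x (C u)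
      have h2 : (starRingEnd ℂ) (inner ℂ (S (adjFun DS S x)) (C y') : ℂ)
          = (starRingEnd ℂ) (inner ℂ x (C u) : ℂ) := by
        rw [inner_conj_symm, inner_conj_symm, ← conj_inner_swap C hC (S (adjFun DS S x)) y',
          conj_inner_swap C hC u x, h]
      exact (starRingEnd ℂ).injective h2
    · intro y' hy'
      exact ⟨C (S (adjFun DS S (C y'))), fun y hy => conjSym y hy y' hy'⟩
  · intro y' hy'
    exact adjFun_eq D0 (fun y => C (S (adjFun DS S (C y)))) hdenseD0
      (fun y hy => conjSym y hy y' hy')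
  · intro y hy
    have e : (inner ℂ (C (S (adjFun DS S (C y)))) y : ℂ)
        = inner ℂ (adjFun DS S (C y)) (adjFun DS S (C y)) := by
      rw [conj_inner_swap C hC, sym_lemma' DS S hy.1 hy.2]
    constructor
    · rw [e]
      have h := inner_self_nonneg (𝕜 := ℂ) (x := adjFun DS S (C y))
      rwa [RCLike.re_to_complex] at h
    · rw [e]
      have h := inner_self_im (𝕜 := ℂ) (adjFun DS S (C y))
      rwa [RCLike.im_to_complex] at h
end
end

section
/- A densely defined closed antilinear operator T on H is antilinear normal (i.e., TT^♯ = T^♯T) if and only if D(T) = D(T^♯) and ‖Tx‖ = ‖T^♯x‖ for all x ∈ D(T). -/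
open Classical
noncomputable section

variable {H K : Type*}
  [NormedAddCommGroup H] [InnerProductSpace ℂ H] [CompleteSpace H]
  [NormedAddCommGroup K] [InnerProductSpace ℂ K] [CompleteSpace K]

section AuxNormal

set_option linter.unusedSectionVars false
set_option maxHeartbeats 1000000
set_option synthInstance.maxHeartbeats 1000000

local notation "⟪" x ", " y "⟫" => @inner ℂ _ _ x y

attribute [local instance] InnerProductSpace.complexToReal
attribute [local instance 2000] NormedSpace.toModule

namespace AuxNormal

variable {D : Set H} {f : H → H}

/-- Graph predicate for the antilinear adjoint. -/
def MemGs (D : Set H) (f : H → H) (y u : H) : Prop :=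
  ∀ x ∈ D, (starRingEnd ℂ) ⟪f x, y⟫ = ⟪x, u⟫

lemma MemGs.mem {y u : H} (h : MemGs D f y u) : y ∈ sharpDom D f := ⟨u, h⟩

lemma memGs_sharp {y : H} (hy : y ∈ sharpDom D f) : MemGs D f y (sharpFun D f y) := by
  have h : ∃ u : H, ∀ x ∈ D, (starRingEnd ℂ) (inner ℂ (f x) y : ℂ) = inner ℂ x u := hy
  intro x hx
  rw [sharpFun, dif_pos h]
  exact h.choose_spec x hx

lemma dense_eq (hdense : Dense D) {u v : H} (h : ∀ x ∈ D, ⟪x, u⟫ = ⟪x, v⟫) : u = v := by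
  refine ext_inner_left ℂ fun w => ?_
  have hcl : IsClosed {x : H | ⟪x, u⟫ = ⟪x, v⟫} :=
    isClosed_eq (continuous_id.inner continuous_const) (continuous_id.inner continuous_const)
  exact hcl.closure_subset_iff.2 h (hdense w)

lemma MemGs.sharpFun_eq (hdense : Dense D) {y u : H} (h : MemGs D f y u) :
    sharpFun D f y = u :=
  dense_eq hdense fun x hx => ((memGs_sharp h.mem) x hx).symm.trans (h x hx)

lemma MemGs.add {y u y' u' : H} (h : MemGs D f y u) (h' : MemGs D f y' u') :
    MemGs D f (y + y') (u + u') := fun x hx => by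
  simp [inner_add_right, map_add, h x hx, h' x hx]

lemma MemGs.smul (a : ℂ) {y u : H} (h : MemGs D f y u) :
    MemGs D f (a • y) ((starRingEnd ℂ a) • u) := fun x hx => by
  simp [inner_smul_right, map_mul, h x hx]

lemma MemGs.zero : MemGs D f 0 0 := fun x hx => by simp

lemma MemGs.neg {y u : H} (h : MemGs D f y u) : MemGs D f (-y) (-u) := fun x hx => by
  simp [inner_neg_right, h x hx]

lemma MemGs.sub {y u y' u' : H} (h : MemGs D f y u) (h' : MemGs D f y' u') :
    MemGs D f (y - y') (u - u') := by
  simpa [sub_eq_add_neg] using h.add h'.neg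

lemma MemGs.rsmul (r : ℝ) {y u : H} (h : MemGs D f y u) : MemGs D f (r • y) (r • u) := by
  have := h.smul (r : ℂ)
  simpa [Complex.coe_smul, Complex.conj_ofReal] using this

lemma isClosed_memGs : IsClosed {p : H × H | MemGs D f p.fst p.snd} := by
  have : {p : H × H | MemGs D f p.fst p.snd}
      = ⋂ x ∈ D, {p : H × H | (starRingEnd ℂ) ⟪f x, p.fst⟫ = ⟪x, p.snd⟫} := by
    ext p; simp [MemGs, Set.mem_iInter]
  rw [this]
  refine isClosed_biInter fun x hx => isClosed_eq ?_ ?_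
  · exact (Complex.continuous_conj).comp (continuous_const.inner continuous_fst)
  · exact continuous_const.inner continuous_snd

section ops
variable (hsub : IsLinSubspace D) (hanti : AntilinearOn D f)
include hsub

lemma hD0 : (0 : H) ∈ D := hsub.1
lemma hDadd {x y : H} (hx : x ∈ D) (hy : y ∈ D) : x + y ∈ D := by
  simpa using hsub.2 1 x y hx hy
lemma hDsmul (a : ℂ) {x : H} (hx : x ∈ D) : a • x ∈ D := by
  simpa using hsub.2 a x 0 hx hsub.1
lemma hDneg {x : H} (hx : x ∈ D) : -x ∈ D := by
  simpa using hDsmul hsub (-1) hx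
lemma hDsub {x y : H} (hx : x ∈ D) (hy : y ∈ D) : x - y ∈ D := by
  simpa [sub_eq_add_neg] using hDadd hsub hx (hDneg hsub hy)
lemma hDrsmul (r : ℝ) {x : H} (hx : x ∈ D) : r • x ∈ D := by
  simpa [Complex.coe_smul] using hDsmul hsub (r : ℂ) hx

include hanti

lemma f_zero : f 0 = 0 := by
  have h := hanti 1 0 0 hsub.1 hsub.1
  simpa using h

lemma f_add {x y : H} (hx : x ∈ D) (hy : y ∈ D) : f (x + y) = f x + f y := by
  simpa using hanti 1 x y hx hy

lemma f_smul (a : ℂ) {x : H} (hx : x ∈ D) : f (a • x) = (starRingEnd ℂ a) • f x := by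
  have h := hanti a x 0 hx hsub.1
  simpa [f_zero hsub hanti] using h

lemma f_neg {x : H} (hx : x ∈ D) : f (-x) = -f x := by
  simpa using f_smul hsub hanti (-1) hx

lemma f_sub {x y : H} (hx : x ∈ D) (hy : y ∈ D) : f (x - y) = f x - f y := by
  have := f_add hsub hanti hx (hDneg hsub hy)
  simpa [sub_eq_add_neg, f_neg hsub hanti hy] using this

lemma f_rsmul (r : ℝ) {x : H} (hx : x ∈ D) : f (r • x) = r • f x := by
  have := f_smul hsub hanti (r : ℂ) hx
  simpa [Complex.coe_smul, Complex.conj_ofReal] using this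

end ops

section graphs

variable (hsub : IsLinSubspace D) (hanti : AntilinearOn D f)

/-- Pair constructor in `WithLp 2 (H × H)`. -/
def mkP (x y : H) : WithLp 2 (H × H) := (WithLp.equiv 2 (H × H)).symm (x, y)

@[simp] lemma mkP_fst (x y : H) : (mkP x y).fst = x := rfl
@[simp] lemma mkP_snd (x y : H) : (mkP x y).snd = y := rfl

lemma rinner_apply (q p : WithLp 2 (H × H)) :
    inner ℝ q p = (⟪q.fst, p.fst⟫).re + (⟪q.snd, p.snd⟫).re := rfl

lemma re_inner_comm (a b : H) : (⟪a, b⟫).re = (⟪b, a⟫).re := by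
  rw [← inner_conj_symm b a, Complex.conj_re]

lemma cauchy_of_norm_eq {a b : ℕ → H} (hab : ∀ m n, ‖a m - a n‖ = ‖b m - b n‖)
    (hb : CauchySeq b) : CauchySeq a := by
  rw [Metric.cauchySeq_iff] at hb ⊢
  intro ε hε
  obtain ⟨N, hN⟩ := hb ε hε
  refine ⟨N, fun m hm n hn => ?_⟩
  rw [dist_eq_norm, hab m n, ← dist_eq_norm]
  exact hN m hm n hn



/-- The graph of `T` as a real submodule of `WithLp 2 (H × H)`. -/
def gf : Submodule ℝ (WithLp 2 (H × H)) where
  carrier := {p | p.fst ∈ D ∧ f p.fst = p.snd}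
  add_mem' {p q} hp hq := ⟨hDadd hsub hp.1 hq.1, by
      show f (p.fst + q.fst) = p.snd + q.snd
      rw [f_add hsub hanti hp.1 hq.1, hp.2, hq.2]⟩
  zero_mem' := ⟨hsub.1, by simpa using f_zero hsub hanti⟩
  smul_mem' r p hp := ⟨hDrsmul hsub r hp.1, by
      show f (r • p.fst) = r • p.snd
      rw [f_rsmul hsub hanti r hp.1, hp.2]⟩

/-- The rotated graph `J G(T)`, `J (x, y) = (-y, x)`. -/
def gJ : Submodule ℝ (WithLp 2 (H × H)) where
  carrier := {p | p.snd ∈ D ∧ f p.snd = -p.fst}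
  add_mem' {p q} hp hq := ⟨hDadd hsub hp.1 hq.1, by
      show f (p.snd + q.snd) = -(p.fst + q.fst)
      rw [f_add hsub hanti hp.1 hq.1, hp.2, hq.2]; abel⟩
  zero_mem' := ⟨hsub.1, by simpa using f_zero hsub hanti⟩
  smul_mem' r p hp := ⟨hDrsmul hsub r hp.1, by
      show f (r • p.snd) = -(r • p.fst)
      rw [f_rsmul hsub hanti r hp.1, hp.2]; module⟩

lemma gf_isClosed (hclosed : HasClosedGraph D f) :
    IsClosed ((gf hsub hanti : Submodule ℝ (WithLp 2 (H × H))) : Set (WithLp 2 (H × H))) := by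
  have hc : Continuous (fun p : WithLp 2 (H × H) => ((p.fst, p.snd) : H × H)) :=
    WithLp.prod_continuous_ofLp (p := 2) (α := H) (β := H)
  exact hclosed.preimage hc

lemma gJ_isClosed (hclosed : HasClosedGraph D f) :
    IsClosed ((gJ hsub hanti : Submodule ℝ (WithLp 2 (H × H))) : Set (WithLp 2 (H × H))) := by
  have h1 : Continuous (fun p : WithLp 2 (H × H) => ((p.fst, p.snd) : H × H)) :=
    WithLp.prod_continuous_ofLp (p := 2) (α := H) (β := H)
  have hc : Continuous (fun p : WithLp 2 (H × H) => ((p.snd, -p.fst) : H × H)) :=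
    h1.snd.prodMk h1.fst.neg
  exact hclosed.preimage hc

/-- The graph of the antilinear adjoint, as an orthogonal complement. -/
def gs : Submodule ℝ (WithLp 2 (H × H)) := (gJ hsub hanti)ᗮ

lemma mem_gs_iff {p : WithLp 2 (H × H)} :
    p ∈ gs hsub hanti ↔ MemGs D f p.fst p.snd := by
  rw [gs, Submodule.mem_orthogonal]
  constructor
  · intro h x hx
    have h1 := h (mkP (-(f x)) x) ⟨hx, (neg_neg _).symm⟩
    have h2 := h (mkP (-(f (Complex.I • x))) (Complex.I • x))
      ⟨hDsmul hsub Complex.I hx, (neg_neg _).symm⟩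
    rw [rinner_apply, mkP_fst, mkP_snd] at h1 h2
    have hfI : f (Complex.I • x) = -(Complex.I • f x) := by
      rw [f_smul hsub hanti Complex.I hx, Complex.conj_I, neg_smul]
    rw [hfI, neg_neg, inner_smul_left, inner_smul_left, Complex.conj_I] at h2
    rw [inner_neg_left] at h1
    set z : ℂ := ⟪f x, p.fst⟫
    set w : ℂ := ⟪x, p.snd⟫
    have hre : -z.re + w.re = 0 := by simpa using h1
    have him : z.im + w.im = 0 := by
      simpa [Complex.mul_re] using h2
    apply Complex.ext
    · simpa using by linarith
    · simpa using by linarith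
  · intro h q hq
    rw [rinner_apply]
    have h1 := h q.snd hq.1
    rw [hq.2, inner_neg_left, map_neg] at h1
    have : (⟪q.snd, p.snd⟫ : ℂ) = -(starRingEnd ℂ) ⟪q.fst, p.fst⟫ := h1.symm
    rw [this]
    simp only [Complex.neg_re, Complex.conj_re]
    ring

variable (hdense : Dense D) (hclosed : HasClosedGraph D f)

include hsub hanti hdense hclosed

lemma surj1 (h : H) : ∃ x ∈ D, f x ∈ sharpDom D f ∧ x + sharpFun D f (f x) = h := by
  haveI : CompleteSpace (gJ hsub hanti) := (gJ_isClosed hsub hanti hclosed).completeSpace_coe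
  obtain ⟨q, hq, s, hs, hsum⟩ :=
    Submodule.exists_add_mem_mem_orthogonal (K := gJ hsub hanti) (mkP 0 h)
  have hms : MemGs D f s.fst s.snd := (mem_gs_iff hsub hanti).mp hs
  have h1 : (0 : H) = q.fst + s.fst := congrArg (fun p : WithLp 2 (H × H) => p.fst) hsum
  have h2 : h = q.snd + s.snd := congrArg (fun p : WithLp 2 (H × H) => p.snd) hsum
  have hs1 : s.fst = f q.snd := by
    rw [hq.2]
    exact eq_neg_of_add_eq_zero_right h1.symm
  rw [hs1] at hms
  refine ⟨q.snd, hq.1, hms.mem, ?_⟩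
  rw [hms.sharpFun_eq hdense, h2]

lemma surj2 (h : H) :
    ∃ y ∈ sharpDom D f, sharpFun D f y ∈ D ∧ y + f (sharpFun D f y) = h := by
  haveI : CompleteSpace (gJ hsub hanti) := (gJ_isClosed hsub hanti hclosed).completeSpace_coe
  obtain ⟨q, hq, s, hs, hsum⟩ :=
    Submodule.exists_add_mem_mem_orthogonal (K := gJ hsub hanti) (mkP h 0)
  have hms : MemGs D f s.fst s.snd := (mem_gs_iff hsub hanti).mp hs
  have h1 : h = q.fst + s.fst := congrArg (fun p : WithLp 2 (H × H) => p.fst) hsum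
  have h2 : (0 : H) = q.snd + s.snd := congrArg (fun p : WithLp 2 (H × H) => p.snd) hsum
  have hs2 : s.snd = -q.snd := eq_neg_of_add_eq_zero_right h2.symm
  refine ⟨s.fst, hms.mem, ?_, ?_⟩
  · rw [hms.sharpFun_eq hdense, hs2]
    exact hDneg hsub hq.1
  · rw [hms.sharpFun_eq hdense, hs2, f_neg hsub hanti hq.1, hq.2, neg_neg, h1]
    abel

lemma starstar {x v : H}
    (h : ∀ y u : H, MemGs D f y u → (⟪y, v⟫).re = (⟪u, x⟫).re) :
    x ∈ D ∧ f x = v := by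
  haveI : CompleteSpace (gJ hsub hanti) := (gJ_isClosed hsub hanti hclosed).completeSpace_coe
  have horth : mkP (-v) x ∈ (gs hsub hanti)ᗮ := by
    rw [Submodule.mem_orthogonal]
    intro s hs
    have hms := (mem_gs_iff hsub hanti).mp hs
    have hh := h s.fst s.snd hms
    show inner ℝ s (mkP (-v) x) = 0
    rw [rinner_apply, mkP_fst, mkP_snd, inner_neg_right]
    simp only [Complex.neg_re]
    linarith
  rw [gs, Submodule.orthogonal_orthogonal] at horth
  refine ⟨horth.1, ?_⟩
  have := horth.2
  rw [mkP_fst, mkP_snd, neg_neg] at this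
  exact this


/-- The graph of `T` restricted to `D(T^♯ T)`. -/
def g0 : Submodule ℝ (WithLp 2 (H × H)) where
  carrier := {p | (p.fst ∈ D ∧ f p.fst = p.snd) ∧ f p.fst ∈ sharpDom D f}
  add_mem' {p q} hp hq := by
    refine ⟨(gf hsub hanti).add_mem hp.1 hq.1, ?_⟩
    have : f (p.fst + q.fst) = f p.fst + f q.fst := f_add hsub hanti hp.1.1 hq.1.1
    show f (p.fst + q.fst) ∈ sharpDom D f
    rw [this]
    exact ((memGs_sharp hp.2).add (memGs_sharp hq.2)).mem
  zero_mem' := by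
    refine ⟨(gf hsub hanti).zero_mem, ?_⟩
    show f (0 : H) ∈ sharpDom D f
    rw [f_zero hsub hanti]
    exact MemGs.zero.mem
  smul_mem' r p hp := by
    refine ⟨(gf hsub hanti).smul_mem r hp.1, ?_⟩
    show f (r • p.fst) ∈ sharpDom D f
    rw [f_rsmul hsub hanti r hp.1.1]
    exact ((memGs_sharp hp.2).rsmul r).mem

variable (f) in
/-- The graph of `T^♯` restricted to `D(T T^♯)`. -/
def g0' : Submodule ℝ (WithLp 2 (H × H)) where
  carrier := {p | MemGs D f p.fst p.snd ∧ p.snd ∈ D}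
  add_mem' {p q} hp hq := ⟨hp.1.add hq.1, hDadd hsub hp.2 hq.2⟩
  zero_mem' := ⟨MemGs.zero, hsub.1⟩
  smul_mem' r p hp := ⟨hp.1.rsmul r, hDrsmul hsub r hp.2⟩

lemma core1 {x : H} (hx : x ∈ D) :
    mkP x (f x) ∈ closure ((g0 hsub hanti : Submodule ℝ (WithLp 2 (H × H)))
      : Set (WithLp 2 (H × H))) := by
  set M := (g0 hsub hanti).topologicalClosure with hM
  haveI : CompleteSpace M := (Submodule.isClosed_topologicalClosure _).completeSpace_coe
  obtain ⟨pM, hpM, q, hq, hsum⟩ := Submodule.exists_add_mem_mem_orthogonal (K := M) (mkP x (f x))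
  have hMgf : M ≤ gf hsub hanti :=
    Submodule.topologicalClosure_minimal _ (fun p hp => hp.1) (gf_isClosed hsub hanti hclosed)
  have hqgf : q ∈ gf hsub hanti := by
    have hz : mkP x (f x) ∈ gf hsub hanti := ⟨hx, rfl⟩
    have : q = mkP x (f x) - pM := by rw [hsum]; abel
    rw [this]
    exact Submodule.sub_mem _ hz (hMgf hpM)
  obtain ⟨w, hw, hfw, hwsum⟩ := surj1 hsub hanti hdense hclosed q.fst
  have hwg0 : mkP w (f w) ∈ M := Submodule.le_topologicalClosure _ ⟨⟨hw, rfl⟩, hfw⟩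
  have horth : inner ℝ (mkP w (f w)) q = 0 :=
    (Submodule.mem_orthogonal M q).mp hq _ hwg0
  have hq1 : q.fst = 0 := by
    rw [rinner_apply, mkP_fst, mkP_snd] at horth
    have hAdj := memGs_sharp hfw q.fst hqgf.1
    -- re ⟪f w, q.snd⟫ = re ⟪q.fst, S (f w)⟫
    have e1 : (⟪f w, q.snd⟫).re = (⟪q.fst, sharpFun D f (f w)⟫).re := by
      rw [← hqgf.2, re_inner_comm, ← Complex.conj_re, hAdj]
    have e2 : (⟪w, q.fst⟫).re = (⟪q.fst, w⟫).re := re_inner_comm _ _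
    have e3 : (⟪q.fst, w⟫ : ℂ) + ⟪q.fst, sharpFun D f (f w)⟫ = ⟪q.fst, q.fst⟫ := by
      rw [← inner_add_right, hwsum]
    have e4 : (⟪q.fst, q.fst⟫).re = ‖q.fst‖ ^ 2 := by
      simpa using inner_self_eq_norm_sq (𝕜 := ℂ) q.fst
    have hsumre : (⟪q.fst, w⟫).re + (⟪q.fst, sharpFun D f (f w)⟫).re = ‖q.fst‖ ^ 2 := by
      rw [← Complex.add_re, e3, e4]
    have key : ‖q.fst‖ ^ 2 = 0 := by linarith
    exact norm_eq_zero.mp (pow_eq_zero_iff (by norm_num : 2 ≠ 0) |>.mp key)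
  have hq2 : q.snd = 0 := by
    rw [← hqgf.2, hq1, f_zero hsub hanti]
  have hq0 : q = 0 := by
    have : q = mkP q.fst q.snd := rfl
    rw [this, hq1, hq2]
    rfl
  have hfin : mkP x (f x) = pM := by rw [hsum, hq0, add_zero]
  rw [hfin, ← Submodule.topologicalClosure_coe]
  exact hpM

lemma core2 {y : H} (hy : y ∈ sharpDom D f) :
    mkP y (sharpFun D f y) ∈ closure ((g0' f hsub : Submodule ℝ (WithLp 2 (H × H)))
      : Set (WithLp 2 (H × H))) := by
  set M := (g0' f hsub).topologicalClosure with hM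
  haveI : CompleteSpace M := (Submodule.isClosed_topologicalClosure _).completeSpace_coe
  obtain ⟨pM, hpM, q, hq, hsum⟩ :=
    Submodule.exists_add_mem_mem_orthogonal (K := M) (mkP y (sharpFun D f y))
  have hMgs : M ≤ gs hsub hanti := by
    refine Submodule.topologicalClosure_minimal _ (fun p hp => ?_)
      ((gJ hsub hanti).isClosed_orthogonal)
    exact (mem_gs_iff hsub hanti).mpr hp.1
  have hqgs : q ∈ gs hsub hanti := by
    have hz : mkP y (sharpFun D f y) ∈ gs hsub hanti :=
      (mem_gs_iff hsub hanti).mpr (memGs_sharp hy)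
    have : q = mkP y (sharpFun D f y) - pM := by rw [hsum]; abel
    rw [this]
    exact Submodule.sub_mem _ hz (hMgs hpM)
  have hmq : MemGs D f q.fst q.snd := (mem_gs_iff hsub hanti).mp hqgs
  obtain ⟨w, hw, hsw, hwsum⟩ := surj2 hsub hanti hdense hclosed q.fst
  have hwg0 : mkP w (sharpFun D f w) ∈ M :=
    Submodule.le_topologicalClosure _ ⟨memGs_sharp hw, hsw⟩
  have horth : inner ℝ (mkP w (sharpFun D f w)) q = 0 :=
    (Submodule.mem_orthogonal M q).mp hq _ hwg0
  have hq1 : q.fst = 0 := by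
    rw [rinner_apply, mkP_fst, mkP_snd] at horth
    have hAdj := hmq (sharpFun D f w) hsw
    have e1 : (⟪sharpFun D f w, q.snd⟫).re = (⟪q.fst, f (sharpFun D f w)⟫).re := by
      rw [← hAdj, Complex.conj_re, re_inner_comm]
    have e2 : (⟪w, q.fst⟫).re = (⟪q.fst, w⟫).re := re_inner_comm _ _
    have e3 : (⟪q.fst, w⟫ : ℂ) + ⟪q.fst, f (sharpFun D f w)⟫ = ⟪q.fst, q.fst⟫ := by
      rw [← inner_add_right, hwsum]
    have e4 : (⟪q.fst, q.fst⟫).re = ‖q.fst‖ ^ 2 := by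
      simpa using inner_self_eq_norm_sq (𝕜 := ℂ) q.fst
    have hsumre : (⟪q.fst, w⟫).re + (⟪q.fst, f (sharpFun D f w)⟫).re = ‖q.fst‖ ^ 2 := by
      rw [← Complex.add_re, e3, e4]
    have key : ‖q.fst‖ ^ 2 = 0 := by linarith
    exact norm_eq_zero.mp (pow_eq_zero_iff (by norm_num : 2 ≠ 0) |>.mp key)
  have hq2 : q.snd = 0 := by
    refine dense_eq hdense (u := q.snd) (v := 0) fun x hx => ?_
    have := hmq x hx
    rw [hq1, inner_zero_right] at this
    rw [← this]
    simp
  have hq0 : q = 0 := by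
    have : q = mkP q.fst q.snd := rfl
    rw [this, hq1, hq2]
    rfl
  have hfin : mkP y (sharpFun D f y) = pM := by rw [hsum, hq0, add_zero]
  rw [hfin, ← Submodule.topologicalClosure_coe]
  exact hpM

lemma fwd_norm
    (hset : {y : H | y ∈ sharpDom D f ∧ sharpFun D f y ∈ D}
        = {x : H | x ∈ D ∧ f x ∈ sharpDom D f})
    (hcomm : ∀ y ∈ {y : H | y ∈ sharpDom D f ∧ sharpFun D f y ∈ D},
        f (sharpFun D f y) = sharpFun D f (f y)) :
    ∀ w, w ∈ D → f w ∈ sharpDom D f →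
      w ∈ sharpDom D f ∧ sharpFun D f w ∈ D ∧ ‖f w‖ = ‖sharpFun D f w‖ := by
  intro w hw hfw
  have hw' : w ∈ {y : H | y ∈ sharpDom D f ∧ sharpFun D f y ∈ D} := by
    rw [hset]; exact ⟨hw, hfw⟩
  obtain ⟨hwDs, hSwD⟩ := hw'
  refine ⟨hwDs, hSwD, ?_⟩
  have h1 : (⟪w, sharpFun D f (f w)⟫ : ℂ) = ⟪f w, f w⟫ := by
    rw [← (memGs_sharp hfw) w hw, inner_conj_symm]
  have h2 : (⟪sharpFun D f w, sharpFun D f w⟫ : ℂ) = ⟪w, sharpFun D f (f w)⟫ := by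
    have h3 := (memGs_sharp hwDs) (sharpFun D f w) hSwD
    rw [hcomm w ⟨hwDs, hSwD⟩] at h3
    rw [← h3, inner_conj_symm]
  have hfull : (⟪sharpFun D f w, sharpFun D f w⟫ : ℂ) = ⟪f w, f w⟫ := h2.trans h1
  have hsq : ‖sharpFun D f w‖ ^ 2 = ‖f w‖ ^ 2 := by
    rw [← inner_self_eq_norm_sq (𝕜 := ℂ), ← inner_self_eq_norm_sq (𝕜 := ℂ), hfull]
  calc ‖f w‖ = Real.sqrt (‖f w‖ ^ 2) := (Real.sqrt_sq (norm_nonneg _)).symm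
    _ = Real.sqrt (‖sharpFun D f w‖ ^ 2) := by rw [hsq]
    _ = ‖sharpFun D f w‖ := Real.sqrt_sq (norm_nonneg _)

lemma fwd1
    (hset : {y : H | y ∈ sharpDom D f ∧ sharpFun D f y ∈ D}
        = {x : H | x ∈ D ∧ f x ∈ sharpDom D f})
    (hcomm : ∀ y ∈ {y : H | y ∈ sharpDom D f ∧ sharpFun D f y ∈ D},
        f (sharpFun D f y) = sharpFun D f (f y)) :
    ∀ x ∈ D, x ∈ sharpDom D f ∧ ‖f x‖ = ‖sharpFun D f x‖ := by
  intro x hx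
  have hEprop := fwd_norm hsub hanti hdense hclosed hset hcomm
  have hcl := core1 hsub hanti hdense hclosed hx
  rw [mem_closure_iff_seq_limit] at hcl
  obtain ⟨p, hpmem, hptend⟩ := hcl
  have hcontfst : Continuous (fun q : WithLp 2 (H × H) => q.fst) :=
    WithLp.continuous_fst (p := 2) (α := H) (β := H)
  have hcontsnd : Continuous (fun q : WithLp 2 (H × H) => q.snd) :=
    WithLp.continuous_snd (p := 2) (α := H) (β := H)
  have hw1 : Filter.Tendsto (fun n => (p n).fst) Filter.atTop (nhds x) :=
    (hcontfst.tendsto _).comp hptend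
  have hw2 : Filter.Tendsto (fun n => (p n).snd) Filter.atTop (nhds (f x)) :=
    (hcontsnd.tendsto _).comp hptend
  have hwD : ∀ n, (p n).fst ∈ D := fun n => (hpmem n).1.1
  have hwf : ∀ n, f ((p n).fst) = (p n).snd := fun n => (hpmem n).1.2
  have hwDs : ∀ n, f ((p n).fst) ∈ sharpDom D f := fun n => (hpmem n).2
  have hprop : ∀ n, (p n).fst ∈ sharpDom D f ∧ sharpFun D f ((p n).fst) ∈ D ∧
      ‖f ((p n).fst)‖ = ‖sharpFun D f ((p n).fst)‖ :=
    fun n => hEprop ((p n).fst) (hwD n) (hwDs n)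
  set s : ℕ → H := fun n => sharpFun D f ((p n).fst) with hsdef
  have hnormdiff : ∀ m n, ‖s m - s n‖ = ‖f ((p m).fst) - f ((p n).fst)‖ := by
    intro m n
    have hmem : MemGs D f ((p m).fst - (p n).fst) (s m - s n) :=
      (memGs_sharp (hprop m).1).sub (memGs_sharp (hprop n).1)
    have hdm : (p m).fst - (p n).fst ∈ D := hDsub hsub (hwD m) (hwD n)
    have hfd : f ((p m).fst - (p n).fst) = f ((p m).fst) - f ((p n).fst) :=
      f_sub hsub hanti (hwD m) (hwD n)
    have hfds : f ((p m).fst - (p n).fst) ∈ sharpDom D f := by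
      rw [hfd]
      exact ((memGs_sharp (hwDs m)).sub (memGs_sharp (hwDs n))).mem
    have hE := (hEprop _ hdm hfds).2.2
    rw [hfd, hmem.sharpFun_eq hdense] at hE
    exact hE.symm
  have hfcauchy : CauchySeq (fun n => f ((p n).fst)) := by
    have hcs : CauchySeq (fun n => (p n).snd) := hw2.cauchySeq
    have : (fun n => f ((p n).fst)) = fun n => (p n).snd := funext fun n => hwf n
    rw [this]
    exact hcs
  have hscauchy : CauchySeq s := cauchy_of_norm_eq hnormdiff hfcauchy
  obtain ⟨u, hu⟩ := cauchySeq_tendsto_of_complete hscauchy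
  have hpair : Filter.Tendsto (fun n => (((p n).fst, s n) : H × H)) Filter.atTop (nhds (x, u)) :=
    hw1.prodMk_nhds hu
  have hmemgs : MemGs D f x u := by
    have hcl2 : IsClosed {q : H × H | MemGs D f q.fst q.snd} := isClosed_memGs
    exact hcl2.mem_of_tendsto hpair
      (Filter.Eventually.of_forall fun n => memGs_sharp (hprop n).1)
  refine ⟨hmemgs.mem, ?_⟩
  have hSx : sharpFun D f x = u := hmemgs.sharpFun_eq hdense
  have hn1 : Filter.Tendsto (fun n => ‖s n‖) Filter.atTop (nhds ‖u‖) := hu.norm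
  have hn2 : Filter.Tendsto (fun n => ‖s n‖) Filter.atTop (nhds ‖f x‖) := by
    have heq : (fun n => ‖s n‖) = fun n => ‖(p n).snd‖ := by
      funext n
      rw [← (hprop n).2.2, hwf n]
    rw [heq]
    exact hw2.norm
  rw [hSx]
  exact tendsto_nhds_unique hn2 hn1

lemma fwd2
    (hset : {y : H | y ∈ sharpDom D f ∧ sharpFun D f y ∈ D}
        = {x : H | x ∈ D ∧ f x ∈ sharpDom D f})
    (hcomm : ∀ y ∈ {y : H | y ∈ sharpDom D f ∧ sharpFun D f y ∈ D},
        f (sharpFun D f y) = sharpFun D f (f y)) :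
    ∀ y ∈ sharpDom D f, y ∈ D := by
  intro y hy
  have hEprop := fwd_norm hsub hanti hdense hclosed hset hcomm
  have hcl := core2 hsub hanti hdense hclosed hy
  rw [mem_closure_iff_seq_limit] at hcl
  obtain ⟨p, hpmem, hptend⟩ := hcl
  have hcontfst : Continuous (fun q : WithLp 2 (H × H) => q.fst) :=
    WithLp.continuous_fst (p := 2) (α := H) (β := H)
  have hcontsnd : Continuous (fun q : WithLp 2 (H × H) => q.snd) :=
    WithLp.continuous_snd (p := 2) (α := H) (β := H)
  have hw1 : Filter.Tendsto (fun n => (p n).fst) Filter.atTop (nhds y) :=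
    (hcontfst.tendsto _).comp hptend
  have hw2 : Filter.Tendsto (fun n => (p n).snd) Filter.atTop (nhds (sharpFun D f y)) :=
    (hcontsnd.tendsto _).comp hptend
  have hwDs : ∀ n, (p n).fst ∈ sharpDom D f := fun n => (hpmem n).1.mem
  have hsfun : ∀ n, sharpFun D f ((p n).fst) = (p n).snd :=
    fun n => (hpmem n).1.sharpFun_eq hdense
  have hwE : ∀ n, (p n).fst ∈ D ∧ f ((p n).fst) ∈ sharpDom D f := by
    intro n
    have : (p n).fst ∈ {y : H | y ∈ sharpDom D f ∧ sharpFun D f y ∈ D} := by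
      refine ⟨hwDs n, ?_⟩
      rw [hsfun n]
      exact (hpmem n).2
    rw [hset] at this
    exact this
  have hprop : ∀ n, ‖f ((p n).fst)‖ = ‖sharpFun D f ((p n).fst)‖ :=
    fun n => (hEprop ((p n).fst) (hwE n).1 (hwE n).2).2.2
  have hnormdiff : ∀ m n, ‖f ((p m).fst) - f ((p n).fst)‖ = ‖(p m).snd - (p n).snd‖ := by
    intro m n
    have hdm : (p m).fst - (p n).fst ∈ D := hDsub hsub (hwE m).1 (hwE n).1
    have hfd : f ((p m).fst - (p n).fst) = f ((p m).fst) - f ((p n).fst) :=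
      f_sub hsub hanti (hwE m).1 (hwE n).1
    have hfds : f ((p m).fst - (p n).fst) ∈ sharpDom D f := by
      rw [hfd]
      exact ((memGs_sharp (hwE m).2).sub (memGs_sharp (hwE n).2)).mem
    have hE := (hEprop _ hdm hfds).2.2
    have hmem : MemGs D f ((p m).fst - (p n).fst) ((p m).snd - (p n).snd) :=
      (hpmem m).1.sub (hpmem n).1
    rw [hfd, hmem.sharpFun_eq hdense] at hE
    exact hE
  have hscauchy : CauchySeq (fun n => (p n).snd) := hw2.cauchySeq
  have hfcauchy : CauchySeq (fun n => f ((p n).fst)) := cauchy_of_norm_eq hnormdiff hscauchy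
  obtain ⟨v, hv⟩ := cauchySeq_tendsto_of_complete hfcauchy
  have hpair : Filter.Tendsto (fun n => (((p n).fst, f ((p n).fst)) : H × H))
      Filter.atTop (nhds (y, v)) := hw1.prodMk_nhds hv
  have : (y, v) ∈ {q : H × H | q.fst ∈ D ∧ f q.fst = q.snd} :=
    hclosed.mem_of_tendsto hpair
      (Filter.Eventually.of_forall fun n => ⟨(hwE n).1, rfl⟩)
  exact this.1

lemma polar (hdeq : sharpDom D f = D) (hnorm : ∀ x ∈ D, ‖f x‖ = ‖sharpFun D f x‖) :
    ∀ x ∈ D, ∀ y ∈ D, (⟪f x, f y⟫ : ℂ) = ⟪sharpFun D f x, sharpFun D f y⟫ := by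
  have hDs : ∀ {x : H}, x ∈ D → x ∈ sharpDom D f := fun {x} hx => by rw [hdeq]; exact hx
  have hSadd : ∀ {x y : H}, x ∈ D → y ∈ D →
      sharpFun D f (x + y) = sharpFun D f x + sharpFun D f y :=
    fun {x y} hx hy => ((memGs_sharp (hDs hx)).add (memGs_sharp (hDs hy))).sharpFun_eq hdense
  have hre : ∀ x ∈ D, ∀ y ∈ D,
      (⟪f x, f y⟫ : ℂ).re = (⟪sharpFun D f x, sharpFun D f y⟫ : ℂ).re := by
    intro x hx y hy
    have h1 := norm_add_sq (𝕜 := ℂ) (f x) (f y)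
    have h2 := norm_add_sq (𝕜 := ℂ) (sharpFun D f x) (sharpFun D f y)
    have e1 : ‖f x + f y‖ = ‖sharpFun D f x + sharpFun D f y‖ := by
      rw [← f_add hsub hanti hx hy, ← hSadd hx hy]
      exact hnorm _ (hDadd hsub hx hy)
    have e2 := hnorm x hx
    have e3 := hnorm y hy
    rw [e1, e2, e3] at h1
    simp only [RCLike.re_to_complex] at h1 h2
    linarith
  intro x hx y hy
  apply Complex.ext
  · exact hre x hx y hy
  · have hyI : Complex.I • y ∈ D := hDsmul hsub Complex.I hy
    have h := hre x hx (Complex.I • y) hyI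
    have hfI : f (Complex.I • y) = -(Complex.I • f y) := by
      rw [f_smul hsub hanti Complex.I hy, Complex.conj_I, neg_smul]
    have hSI : sharpFun D f (Complex.I • y) = -(Complex.I • sharpFun D f y) := by
      have hm := (memGs_sharp (hDs hy)).smul Complex.I
      rw [Complex.conj_I, neg_smul] at hm
      exact hm.sharpFun_eq hdense
    rw [hfI, hSI] at h
    simp only [inner_neg_right, inner_smul_right, Complex.neg_re, Complex.mul_re,
      Complex.I_re, Complex.I_im] at h
    linarith

lemma bwd_a (hdeq : sharpDom D f = D) (hnorm : ∀ x ∈ D, ‖f x‖ = ‖sharpFun D f x‖)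
    {y : H} (hy : y ∈ D) (hSy : sharpFun D f y ∈ D) :
    f y ∈ sharpDom D f ∧ sharpFun D f (f y) = f (sharpFun D f y) := by
  have hpol := polar hsub hanti hdense hclosed hdeq hnorm
  have hDs : ∀ {x : H}, x ∈ D → x ∈ sharpDom D f := fun {x} hx => by rw [hdeq]; exact hx
  have hMG : MemGs D f (f y) (f (sharpFun D f y)) := by
    intro x hx
    have h1 : (⟪f x, f y⟫ : ℂ) = ⟪sharpFun D f x, sharpFun D f y⟫ := hpol x hx y hy
    have h2 := (memGs_sharp (hDs hx)) (sharpFun D f y) hSy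
    calc (starRingEnd ℂ) ⟪f x, f y⟫
        = (starRingEnd ℂ) ⟪sharpFun D f x, sharpFun D f y⟫ := by rw [h1]
      _ = ⟪sharpFun D f y, sharpFun D f x⟫ := by rw [inner_conj_symm]
      _ = (starRingEnd ℂ) ⟪f (sharpFun D f y), x⟫ := h2.symm
      _ = ⟪x, f (sharpFun D f y)⟫ := by rw [inner_conj_symm]
  exact ⟨hMG.mem, hMG.sharpFun_eq hdense⟩

lemma bwd_b (hdeq : sharpDom D f = D) (hnorm : ∀ x ∈ D, ‖f x‖ = ‖sharpFun D f x‖)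
    {y : H} (hy : y ∈ D) (hfy : f y ∈ sharpDom D f) :
    sharpFun D f y ∈ D ∧ f (sharpFun D f y) = sharpFun D f (f y) := by
  have hpol := polar hsub hanti hdense hclosed hdeq hnorm
  have key : ∀ z u : H, MemGs D f z u →
      (⟪z, sharpFun D f (f y)⟫ : ℂ).re = (⟪u, sharpFun D f y⟫ : ℂ).re := by
    intro z u hzu
    have hzD : z ∈ D := by rw [← hdeq]; exact hzu.mem
    have hu : u = sharpFun D f z := (hzu.sharpFun_eq hdense).symm
    have h1 : (⟪f z, f y⟫ : ℂ) = ⟪sharpFun D f z, sharpFun D f y⟫ := hpol z hzD y hy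
    have h2 := (memGs_sharp hfy) z hzD
    rw [hu, ← h2, h1, Complex.conj_re]
  exact starstar hsub hanti hdense hclosed key

end graphs

end AuxNormal
end AuxNormal


/-- A densely defined closed antilinear operator `T = (D, f)` on `H` is
antilinear normal (`TT^♯ = T^♯T`, with equality of the natural composition domains) iff
`D(T) = D(T^♯)` and `‖Tx‖ = ‖T^♯x‖` for all `x ∈ D(T)`. -/
theorem antilinear_normal_iff_norm_eq
    (D : Set H) (f : H → H)
    (hsub : IsLinSubspace D) (hanti : AntilinearOn D f) (hdense : Dense D)
    (hclosed : HasClosedGraph D f) :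
    ({y : H | y ∈ sharpDom D f ∧ sharpFun D f y ∈ D}
        = {x : H | x ∈ D ∧ f x ∈ sharpDom D f} ∧
      ∀ y ∈ {y : H | y ∈ sharpDom D f ∧ sharpFun D f y ∈ D},
        f (sharpFun D f y) = sharpFun D f (f y)) ↔
    (sharpDom D f = D ∧ ∀ x ∈ D, ‖f x‖ = ‖sharpFun D f x‖) := by
  constructor
  · rintro ⟨hset, hcomm⟩
    have h1 := AuxNormal.fwd1 hsub hanti hdense hclosed hset hcomm
    have h2 := AuxNormal.fwd2 hsub hanti hdense hclosed hset hcomm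
    exact ⟨Set.Subset.antisymm (fun y hy => h2 y hy) (fun x hx => (h1 x hx).1),
      fun x hx => (h1 x hx).2⟩
  · rintro ⟨hdeq, hnorm⟩
    constructor
    · ext y
      simp only [Set.mem_setOf_eq]
      constructor
      · rintro ⟨hyDs, hSyD⟩
        have hyD : y ∈ D := by rw [← hdeq]; exact hyDs
        exact ⟨hyD, (AuxNormal.bwd_a hsub hanti hdense hclosed hdeq hnorm hyD hSyD).1⟩
      · rintro ⟨hyD, hfyDs⟩
        exact ⟨by rw [hdeq]; exact hyD,
          (AuxNormal.bwd_b hsub hanti hdense hclosed hdeq hnorm hyD hfyDs).1⟩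
    · rintro y ⟨hyDs, hSyD⟩
      have hyD : y ∈ D := by rw [← hdeq]; exact hyDs
      exact ((AuxNormal.bwd_a hsub hanti hdense hclosed hdeq hnorm hyD hSyD).2).symm
end
end

section
/- Let T be a densely defined closed antilinear operator from H to K. Then (T†)† = T, where T† is the Moore–Penrose inverse of T. -/
set_option linter.unusedSectionVars false


open Classical
noncomputable section

variable {H K : Type*}
  [NormedAddCommGroup H] [InnerProductSpace ℂ H] [CompleteSpace H]
  [NormedAddCommGroup K] [InnerProductSpace ℂ K] [CompleteSpace K]

/-- The orthogonal complement of the kernel `N(T)` of the operator `T = (D, f)`. -/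
def nullPerp (D : Set H) (f : H → K) : Set H := perpSet {x : H | x ∈ D ∧ f x = 0}

/-- Domain `R(T) ⊕ R(T)^⊥` of the Moore–Penrose inverse of `T = (D, f)`. -/
def pinvDom (D : Set H) (f : H → K) : Set K :=
  {y : K | ∃ r ∈ f '' D, ∃ p ∈ perpSet (f '' D), y = r + p}

/-- The Moore–Penrose inverse of `T = (D, f)`: for `y = y₁ + y₂` with `y₁ ∈ R(T)` and
`y₂ ∈ R(T)^⊥`, it is the unique `x ∈ N(T)^⊥ ∩ D(T)` with `f x = y₁` (and it is `0` outside
`R(T) ⊕ R(T)^⊥`; such an `x` is unique for a closed operator). -/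
def pinvFun (D : Set H) (f : H → K) : K → H := fun y =>
  if h : ∃ x, x ∈ D ∧ x ∈ nullPerp D f ∧ f x - y ∈ perpSet (f '' D) then h.choose else 0

namespace PinvProofAux

variable {H K : Type*}
  [NormedAddCommGroup H] [InnerProductSpace ℂ H] [CompleteSpace H]
  [NormedAddCommGroup K] [InnerProductSpace ℂ K] [CompleteSpace K]

/-! ### perpSet basics -/

lemma perp_zero (S : Set K) : (0 : K) ∈ perpSet S := fun z _ => inner_zero_right z

lemma perp_sub {S : Set K} {x y : K} (hx : x ∈ perpSet S) (hy : y ∈ perpSet S) :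
    x - y ∈ perpSet S := fun z hz => by
  rw [inner_sub_right, hx z hz, hy z hz, sub_zero]

lemma perp_neg {S : Set K} {x : K} (hx : x ∈ perpSet S) : -x ∈ perpSet S := by
  have := perp_sub (perp_zero S) hx; simpa using this

lemma eq_zero_of_mem_perp {S : Set K} {x : K} (hxS : x ∈ S) (hx : x ∈ perpSet S) : x = 0 :=
  inner_self_eq_zero.mp (hx x hxS)

lemma perp_swap {S : Set K} {x z : K} (hx : x ∈ perpSet S) (hz : z ∈ S) :
    (inner ℂ x z : ℂ) = 0 := by
  rw [← inner_conj_symm, hx z hz, map_zero]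

/-! ### basic algebra of D and f -/

section ops

variable {D : Set H} {f : H → K} (hsub : IsLinSubspace D) (hanti : AntilinearOn D f)

include hsub hanti

lemma D_add {x y : H} (hx : x ∈ D) (hy : y ∈ D) : x + y ∈ D := by
  have := hsub.2 1 x y hx hy; simpa using this

lemma D_smul (a : ℂ) {x : H} (hx : x ∈ D) : a • x ∈ D := by
  have := hsub.2 a x 0 hx hsub.1; simpa using this

lemma D_sub {x y : H} (hx : x ∈ D) (hy : y ∈ D) : x - y ∈ D := by
  have := hsub.2 (-1) y x hy hx; rw [neg_one_smul] at this
  simpa [sub_eq_add_neg, add_comm] using this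

lemma f_zero : f 0 = 0 := by
  have := hanti 1 0 0 hsub.1 hsub.1
  simp only [one_smul, add_zero, map_one] at this
  have h2 : f 0 = f 0 + f 0 := by simpa using this
  exact left_eq_add.mp h2

lemma f_add {x y : H} (hx : x ∈ D) (hy : y ∈ D) : f (x + y) = f x + f y := by
  have := hanti 1 x y hx hy; simpa using this

lemma f_sub {x y : H} (hx : x ∈ D) (hy : y ∈ D) : f (x - y) = f x - f y := by
  have := hanti (-1) y x hy hx
  rw [neg_one_smul] at this
  rw [sub_eq_add_neg, add_comm, this]
  simp [sub_eq_add_neg, add_comm]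

/-- The kernel as a submodule. -/
def Nsub : Submodule ℂ H where
  carrier := {x : H | x ∈ D ∧ f x = 0}
  zero_mem' := ⟨hsub.1, f_zero hsub hanti⟩
  add_mem' := fun hx hy => ⟨D_add hsub hanti hx.1 hy.1, by
    rw [f_add hsub hanti hx.1 hy.1, hx.2, hy.2, add_zero]⟩
  smul_mem' := fun a x hx => ⟨D_smul hsub hanti a hx.1, by
    have := hanti a x 0 hx.1 hsub.1
    simp only [add_zero] at this
    rw [this, hx.2, f_zero hsub hanti, smul_zero, add_zero]⟩

lemma Nsub_closed (hclosed : HasClosedGraph D f) :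
    IsClosed ((Nsub hsub hanti : Submodule ℂ H) : Set H) := by
  have : ((Nsub hsub hanti : Submodule ℂ H) : Set H)
      = (fun x : H => (x, (0 : K))) ⁻¹' {p : H × K | p.1 ∈ D ∧ f p.1 = p.2} := by
    ext x; simp [Nsub, Set.mem_preimage]
  rw [this]
  exact hclosed.preimage (continuous_id.prodMk continuous_const)

/-- Orthogonal decomposition along the kernel. -/
lemma decomp (hclosed : HasClosedGraph D f) (x : H) :
    ∃ n, (n ∈ D ∧ f n = 0) ∧ ∃ z, z ∈ nullPerp D f ∧ x = n + z := by
  haveI : CompleteSpace (Nsub hsub hanti : Submodule ℂ H) :=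
    (Nsub_closed hsub hanti hclosed).completeSpace_coe
  obtain ⟨n, hn, z, hz, hxz⟩ :=
    Submodule.exists_add_mem_mem_orthogonal (K := Nsub hsub hanti) x
  refine ⟨n, hn, z, ?_, hxz⟩
  intro m hm
  exact (Submodule.mem_orthogonal _ z).1 hz m hm

/-- Decomposition of an element of `D` with the `N^⊥`-part in `D`. -/
lemma decompD (hclosed : HasClosedGraph D f) {x : H} (hx : x ∈ D) :
    ∃ n, (n ∈ D ∧ f n = 0) ∧ ∃ z, z ∈ D ∧ z ∈ nullPerp D f ∧ x = n + z := by
  obtain ⟨n, hn, z, hz, hxz⟩ := decomp hsub hanti hclosed x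
  refine ⟨n, hn, z, ?_, hz, hxz⟩
  have : z = x - n := by rw [hxz]; abel
  rw [this]; exact D_sub hsub hanti hx hn.1

/-- Uniqueness of the Moore–Penrose witness. -/
lemma pinv_uniq {y : K} {x x' : H}
    (hx : x ∈ D ∧ x ∈ nullPerp D f ∧ f x - y ∈ perpSet (f '' D))
    (hx' : x' ∈ D ∧ x' ∈ nullPerp D f ∧ f x' - y ∈ perpSet (f '' D)) : x = x' := by
  have hdD : x - x' ∈ D := D_sub hsub hanti hx.1 hx'.1
  have hfd : f (x - x') = (f x - y) - (f x' - y) := by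
    rw [f_sub hsub hanti hx.1 hx'.1]; abel
  have hfd_perp : f (x - x') ∈ perpSet (f '' D) := by
    rw [hfd]; exact perp_sub hx.2.2 hx'.2.2
  have hfd_mem : f (x - x') ∈ f '' D := ⟨x - x', hdD, rfl⟩
  have hfd0 : f (x - x') = 0 := eq_zero_of_mem_perp hfd_mem hfd_perp
  have hN : x - x' ∈ {w : H | w ∈ D ∧ f w = 0} := ⟨hdD, hfd0⟩
  have hNp : x - x' ∈ nullPerp D f := perp_sub hx.2.1 hx'.2.1
  have : x - x' = 0 := eq_zero_of_mem_perp hN hNp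
  exact sub_eq_zero.mp this


lemma pinv_eq (y : K) {x : H}
    (hx : x ∈ D ∧ x ∈ nullPerp D f ∧ f x - y ∈ perpSet (f '' D)) :
    pinvFun D f y = x := by
  have hE : ∃ x, x ∈ D ∧ x ∈ nullPerp D f ∧ f x - y ∈ perpSet (f '' D) := ⟨x, hx⟩
  simp only [pinvFun]
  rw [dif_pos hE]
  exact pinv_uniq hsub hanti hE.choose_spec hx

lemma mem_pinvDom_iff (hclosed : HasClosedGraph D f) (y : K) :
    y ∈ pinvDom D f ↔ ∃ x, x ∈ D ∧ x ∈ nullPerp D f ∧ f x - y ∈ perpSet (f '' D) := by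
  constructor
  · rintro ⟨r, ⟨x₀, hx₀, rfl⟩, p, hp, rfl⟩
    obtain ⟨n, hn, z, hzD, hz, rfl⟩ := decompD hsub hanti hclosed hx₀
    refine ⟨z, hzD, hz, ?_⟩
    have h1 : f (n + z) = f z := by rw [f_add hsub hanti hn.1 hzD, hn.2, zero_add]
    have h2 : f z - (f (n + z) + p) = -p := by rw [h1]; abel
    rw [h2]; exact perp_neg hp
  · rintro ⟨x, hxD, hxN, hperp⟩
    exact ⟨f x, ⟨x, hxD, rfl⟩, -(f x - y), perp_neg hperp, by abel⟩

lemma image_pinv (hclosed : HasClosedGraph D f) :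
    pinvFun D f '' pinvDom D f = {x : H | x ∈ D ∧ x ∈ nullPerp D f} := by
  ext x
  constructor
  · rintro ⟨y, hy, rfl⟩
    obtain ⟨x', hx'⟩ := (mem_pinvDom_iff hsub hanti hclosed y).1 hy
    rw [pinv_eq hsub hanti y hx']
    exact ⟨hx'.1, hx'.2.1⟩
  · rintro ⟨hxD, hxN⟩
    refine ⟨f x, ⟨f x, ⟨x, hxD, rfl⟩, 0, perp_zero _, (add_zero _).symm⟩, ?_⟩
    exact pinv_eq hsub hanti (f x) ⟨hxD, hxN, by rw [sub_self]; exact perp_zero _⟩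

lemma ker_pinv (hclosed : HasClosedGraph D f) :
    {y : K | y ∈ pinvDom D f ∧ pinvFun D f y = 0} = perpSet (f '' D) := by
  ext y
  constructor
  · rintro ⟨hyD, hy0⟩
    obtain ⟨x', hx'⟩ := (mem_pinvDom_iff hsub hanti hclosed y).1 hyD
    have hval : pinvFun D f y = x' := pinv_eq hsub hanti y hx'
    have hx0 : x' = 0 := by rw [← hval, hy0]
    have h2 := hx'.2.2
    rw [hx0, f_zero hsub hanti, zero_sub] at h2
    have := perp_neg h2
    simpa using this
  · intro hy
    refine ⟨⟨0, ⟨0, hsub.1, f_zero hsub hanti⟩, y, hy, (zero_add y).symm⟩, ?_⟩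
    refine pinv_eq hsub hanti y ⟨hsub.1, perp_zero _, ?_⟩
    rw [f_zero hsub hanti, zero_sub]
    exact perp_neg hy

lemma perpM (hclosed : HasClosedGraph D f) (hdense : Dense D) :
    perpSet {x : H | x ∈ D ∧ x ∈ nullPerp D f} = {x : H | x ∈ D ∧ f x = 0} := by
  ext y
  constructor
  · intro hy
    obtain ⟨n, hn, w, hw, rfl⟩ := decomp hsub hanti hclosed y
    have hw0 : w = 0 := by
      have hDperp : ∀ x ∈ D, (inner ℂ x w : ℂ) = 0 := by
        intro x hx
        obtain ⟨m, hm, z, hzD, hz, rfl⟩ := decompD hsub hanti hclosed hx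
        have h1 : (inner ℂ m w : ℂ) = 0 := hw m hm
        have h2 : (inner ℂ z (n + w) : ℂ) = 0 := hy z ⟨hzD, hz⟩
        have h3 : (inner ℂ z n : ℂ) = 0 := perp_swap hz hn
        have h4 : (inner ℂ z w : ℂ) = 0 := by
          rw [inner_add_right, h3, zero_add] at h2; exact h2
        rw [inner_add_left, h1, h4, add_zero]
      have heq : (fun x : H => (inner ℂ x w : ℂ)) = fun _ => 0 :=
        Continuous.ext_on hdense (continuous_id.inner continuous_const)
          continuous_const (fun x hx => hDperp x hx)
      exact inner_self_eq_zero.mp (congrFun heq w)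
    rw [hw0, add_zero]
    exact hn
  · intro hn z hz
    exact perp_swap hz.2 hn

lemma outer_uniq (hclosed : HasClosedGraph D f) (hdense : Dense D) {x : H} {u u' : K}
    (hu : u ∈ pinvDom D f ∧ u ∈ nullPerp (pinvDom D f) (pinvFun D f) ∧
      pinvFun D f u - x ∈ perpSet (pinvFun D f '' pinvDom D f))
    (hu' : u' ∈ pinvDom D f ∧ u' ∈ nullPerp (pinvDom D f) (pinvFun D f) ∧
      pinvFun D f u' - x ∈ perpSet (pinvFun D f '' pinvDom D f)) : u = u' := by
  obtain ⟨xu, hxu⟩ := (mem_pinvDom_iff hsub hanti hclosed u).1 hu.1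
  obtain ⟨xu', hxu'⟩ := (mem_pinvDom_iff hsub hanti hclosed u').1 hu'.1
  have hvu : pinvFun D f u = xu := pinv_eq hsub hanti u hxu
  have hvu' : pinvFun D f u' = xu' := pinv_eq hsub hanti u' hxu'
  have hKer : {y : K | y ∈ pinvDom D f ∧ pinvFun D f y = 0} = perpSet (f '' D) :=
    ker_pinv hsub hanti hclosed
  have ha : xu - x ∈ {w : H | w ∈ D ∧ f w = 0} := by
    rw [← perpM hsub hanti hclosed hdense, ← image_pinv hsub hanti hclosed, ← hvu]
    exact hu.2.2
  have ha' : xu' - x ∈ {w : H | w ∈ D ∧ f w = 0} := by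
    rw [← perpM hsub hanti hclosed hdense, ← image_pinv hsub hanti hclosed, ← hvu']
    exact hu'.2.2
  have hd : xu - xu' ∈ {w : H | w ∈ D ∧ f w = 0} := by
    have h1 : (xu - x) - (xu' - x) ∈ Nsub hsub hanti :=
      Submodule.sub_mem _ ha ha'
    have h2 : (xu - x) - (xu' - x) = xu - xu' := by abel
    rw [h2] at h1
    exact h1
  have hdN : xu - xu' ∈ nullPerp D f := perp_sub hxu.2.1 hxu'.2.1
  have h0 : xu = xu' := sub_eq_zero.mp (eq_zero_of_mem_perp hd hdN)
  have hdiff : u' - u ∈ perpSet (f '' D) := by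
    have h1 := perp_sub hxu.2.2 hxu'.2.2
    have h2 : (f xu - u) - (f xu' - u') = u' - u := by rw [h0]; abel
    rw [h2] at h1
    exact h1
  have h5 : (inner ℂ (u' - u) u : ℂ) = 0 := hu.2.1 _ (by rw [hKer]; exact hdiff)
  have h6 : (inner ℂ (u' - u) u' : ℂ) = 0 := hu'.2.1 _ (by rw [hKer]; exact hdiff)
  have h7 : (inner ℂ (u' - u) (u' - u) : ℂ) = 0 := by
    rw [inner_sub_right, h5, h6, sub_zero]
  exact (sub_eq_zero.mp (inner_self_eq_zero.mp h7)).symm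

end ops

end PinvProofAux

/-- For a densely defined closed antilinear operator `T = (D, f)` from `H`
to `K`, the Moore–Penrose inverse of the Moore–Penrose inverse of `T` is `T` itself:
`(T†)† = T`. -/
theorem pinv_pinv_eq_self
    (D : Set H) (f : H → K)
    (hsub : IsLinSubspace D) (hanti : AntilinearOn D f) (hdense : Dense D)
    (hclosed : HasClosedGraph D f) :
    pinvDom (pinvDom D f) (pinvFun D f) = D ∧
    ∀ x ∈ D, pinvFun (pinvDom D f) (pinvFun D f) x = f x := by
  have hM : pinvFun D f '' pinvDom D f = {x : H | x ∈ D ∧ x ∈ nullPerp D f} :=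
    PinvProofAux.image_pinv hsub hanti hclosed
  have hPM : perpSet {x : H | x ∈ D ∧ x ∈ nullPerp D f} = {x : H | x ∈ D ∧ f x = 0} :=
    PinvProofAux.perpM hsub hanti hclosed hdense
  have hKer : {y : K | y ∈ pinvDom D f ∧ pinvFun D f y = 0} = perpSet (f '' D) :=
    PinvProofAux.ker_pinv hsub hanti hclosed
  constructor
  · ext x
    constructor
    · rintro ⟨r, hr, p, hp, rfl⟩
      rw [hM] at hr
      rw [hM, hPM] at hp
      exact PinvProofAux.D_add hsub hanti hr.1 hp.1
    · intro hx
      obtain ⟨n, hn, z, hzD, hz, rfl⟩ := PinvProofAux.decompD hsub hanti hclosed hx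
      refine ⟨z, ?_, n, ?_, add_comm n z⟩
      · rw [hM]; exact ⟨hzD, hz⟩
      · rw [hM, hPM]; exact hn
  · intro x hx
    obtain ⟨n, hn, z, hzD, hz, hxz⟩ := PinvProofAux.decompD hsub hanti hclosed hx
    have hfx : f x = f z := by
      rw [hxz, PinvProofAux.f_add hsub hanti hn.1 hzD, hn.2, zero_add]
    have hwitness : f x ∈ pinvDom D f ∧ f x ∈ nullPerp (pinvDom D f) (pinvFun D f) ∧
        pinvFun D f (f x) - x ∈ perpSet (pinvFun D f '' pinvDom D f) := by
      refine ⟨⟨f x, ⟨x, hx, rfl⟩, 0, PinvProofAux.perp_zero _, (add_zero _).symm⟩, ?_, ?_⟩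
      · intro w hw
        rw [hKer] at hw
        exact PinvProofAux.perp_swap hw ⟨x, hx, rfl⟩
      · have hval : pinvFun D f (f x) = z :=
          PinvProofAux.pinv_eq hsub hanti (f x)
            ⟨hzD, hz, by rw [hfx, sub_self]; exact PinvProofAux.perp_zero _⟩
        rw [hval, hM, hPM]
        have hzn : z - x = -n := by rw [hxz]; abel
        rw [hzn]
        exact (PinvProofAux.Nsub hsub hanti).neg_mem hn
    have hE : ∃ u, u ∈ pinvDom D f ∧ u ∈ nullPerp (pinvDom D f) (pinvFun D f) ∧
        pinvFun D f u - x ∈ perpSet (pinvFun D f '' pinvDom D f) := ⟨f x, hwitness⟩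
    show (if h : ∃ u, u ∈ pinvDom D f ∧ u ∈ nullPerp (pinvDom D f) (pinvFun D f) ∧
        pinvFun D f u - x ∈ perpSet (pinvFun D f '' pinvDom D f) then h.choose else 0) = f x
    rw [dif_pos hE]
    exact PinvProofAux.outer_uniq hsub hanti hclosed hdense hE.choose_spec hwitness
end
end

section
/- Let T be a densely defined closed antilinear operator from H to K with closed range. Then R(T) = R(T^♯) if and only if T†T ⊂ TT† (i.e., TT† extends T†T). -/
open Classical
noncomputable section

variable {H K : Type*}
  [NormedAddCommGroup H] [InnerProductSpace ℂ H] [CompleteSpace H]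
  [NormedAddCommGroup K] [InnerProductSpace ℂ K] [CompleteSpace K]

set_option linter.unusedSectionVars false
set_option linter.unusedVariables false

section Aux

variable {D : Set H} {f : H → H}

lemma IsLinSubspace.smul_mem' (hsub : IsLinSubspace D) (a : ℂ) {x : H} (hx : x ∈ D) :
    a • x ∈ D := by
  simpa using hsub.2 a x 0 hx hsub.1

lemma IsLinSubspace.add_mem' (hsub : IsLinSubspace D) {x y : H} (hx : x ∈ D) (hy : y ∈ D) :
    x + y ∈ D := by
  simpa using hsub.2 1 x y hx hy

lemma IsLinSubspace.sub_mem' (hsub : IsLinSubspace D) {x y : H} (hx : x ∈ D) (hy : y ∈ D) :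
    x - y ∈ D := by
  have := hsub.2 (-1) y x hy hx
  simpa [sub_eq_add_neg, add_comm] using this

lemma AntilinearOn.map_zero (hsub : IsLinSubspace D) (hanti : AntilinearOn D f) : f 0 = 0 := by
  have := hanti 1 0 0 hsub.1 hsub.1
  simpa using this

lemma AntilinearOn.map_add (hsub : IsLinSubspace D) (hanti : AntilinearOn D f)
    {x y : H} (hx : x ∈ D) (hy : y ∈ D) : f (x + y) = f x + f y := by
  simpa using hanti 1 x y hx hy

lemma AntilinearOn.map_smul (hsub : IsLinSubspace D) (hanti : AntilinearOn D f)
    (a : ℂ) {x : H} (hx : x ∈ D) : f (a • x) = (starRingEnd ℂ a) • f x := by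
  have := hanti a x 0 hx hsub.1
  simpa [hanti.map_zero hsub] using this

lemma AntilinearOn.map_sub (hsub : IsLinSubspace D) (hanti : AntilinearOn D f)
    {x y : H} (hx : x ∈ D) (hy : y ∈ D) : f (x - y) = f x - f y := by
  have h1 := hanti (-1) y x hy hx
  simp only [map_neg, map_one, neg_smul, one_smul] at h1
  rw [sub_eq_add_neg, add_comm, h1]
  abel

/-- Kernel of `(D, f)` as a submodule. -/
def kerSub (hsub : IsLinSubspace D) (hanti : AntilinearOn D f) : Submodule ℂ H where
  carrier := {x | x ∈ D ∧ f x = 0}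
  zero_mem' := ⟨hsub.1, hanti.map_zero hsub⟩
  add_mem' := fun {a b} ha hb =>
    ⟨hsub.add_mem' ha.1 hb.1, by rw [hanti.map_add hsub ha.1 hb.1, ha.2, hb.2, add_zero]⟩
  smul_mem' := fun c {x} hx =>
    ⟨hsub.smul_mem' c hx.1, by rw [hanti.map_smul hsub c hx.1, hx.2, smul_zero]⟩

/-- Range of `(D, f)` as a submodule. -/
def ranSub (hsub : IsLinSubspace D) (hanti : AntilinearOn D f) : Submodule ℂ H where
  carrier := f '' D
  zero_mem' := ⟨0, hsub.1, hanti.map_zero hsub⟩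
  add_mem' := by
    rintro a b ⟨x, hx, rfl⟩ ⟨y, hy, rfl⟩
    exact ⟨x + y, hsub.add_mem' hx hy, hanti.map_add hsub hx hy⟩
  smul_mem' := by
    rintro c x ⟨x, hx, rfl⟩
    refine ⟨(starRingEnd ℂ c) • x, hsub.smul_mem' _ hx, ?_⟩
    rw [hanti.map_smul hsub _ hx]
    simp

lemma perpSet_eq (U : Submodule ℂ H) : perpSet (U : Set H) = (Uᗮ : Set H) := by
  ext y
  simp [perpSet, Submodule.mem_orthogonal]

lemma nullPerp_eq (hsub : IsLinSubspace D) (hanti : AntilinearOn D f) :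
    nullPerp D f = ((kerSub hsub hanti)ᗮ : Set H) := by
  rw [← perpSet_eq]; rfl

lemma perpRan_eq (hsub : IsLinSubspace D) (hanti : AntilinearOn D f) :
    perpSet (f '' D) = ((ranSub hsub hanti)ᗮ : Set H) := by
  rw [← perpSet_eq]; rfl

lemma kerSub_isClosed (hsub : IsLinSubspace D) (hanti : AntilinearOn D f)
    (hclosed : HasClosedGraph D f) : IsClosed ((kerSub hsub hanti : Submodule ℂ H) : Set H) := by
  have : ((kerSub hsub hanti : Submodule ℂ H) : Set H)
      = (fun x : H => (x, (0:H))) ⁻¹' {p : H × H | p.1 ∈ D ∧ f p.1 = p.2} := by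
    ext x; simp [kerSub, Set.mem_preimage]
  rw [this]
  exact hclosed.preimage (by fun_prop)

lemma dense_inner_zero (hdense : Dense D) {v : H} (h : ∀ x ∈ D, (inner ℂ x v : ℂ) = 0) :
    v = 0 := by
  have hall : ∀ x : H, (inner ℂ x v : ℂ) = 0 := by
    have hc : IsClosed {x : H | (inner ℂ x v : ℂ) = 0} := by
      exact isClosed_eq (by continuity : Continuous fun x : H => (inner ℂ x v : ℂ)) continuous_const
    intro x
    exact hc.closure_subset_iff.2 (fun z hz => h z hz) (hdense.closure_eq ▸ Set.mem_univ x
      |> fun _ => by rw [hdense.closure_eq]; trivial)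
  simpa using hall v

end Aux

section Pinv

variable {D : Set H} {f : H → H}

lemma perpSet_zero_mem (S : Set H) : (0:H) ∈ perpSet S := fun z _ => inner_zero_right z

lemma perpSet_sub_mem {S : Set H} {a b : H} (ha : a ∈ perpSet S) (hb : b ∈ perpSet S) :
    a - b ∈ perpSet S := fun z hz => by
  rw [inner_sub_right, ha z hz, hb z hz, sub_zero]

lemma perpSet_add_mem {S : Set H} {a b : H} (ha : a ∈ perpSet S) (hb : b ∈ perpSet S) :
    a + b ∈ perpSet S := fun z hz => by
  rw [inner_add_right, ha z hz, hb z hz, add_zero]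

lemma perpSet_smul_mem {S : Set H} (c : ℂ) {a : H} (ha : a ∈ perpSet S) :
    c • a ∈ perpSet S := fun z hz => by
  rw [inner_smul_right, ha z hz, mul_zero]

lemma perpSet_neg_mem {S : Set H} {a : H} (ha : a ∈ perpSet S) :
    -a ∈ perpSet S := by
  simpa using perpSet_smul_mem (-1) ha

lemma pinv_uniq (hsub : IsLinSubspace D) (hanti : AntilinearOn D f) {y x x' : H}
    (h1 : x ∈ D ∧ x ∈ nullPerp D f ∧ f x - y ∈ perpSet (f '' D))
    (h2 : x' ∈ D ∧ x' ∈ nullPerp D f ∧ f x' - y ∈ perpSet (f '' D)) : x = x' := by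
  obtain ⟨hxD, hxN, hxP⟩ := h1
  obtain ⟨hx'D, hx'N, hx'P⟩ := h2
  have hfd : f (x - x') = f x - f x' := hanti.map_sub hsub hxD hx'D
  have hmem : f (x - x') ∈ f '' D := ⟨x - x', hsub.sub_mem' hxD hx'D, rfl⟩
  have hperp : f (x - x') ∈ perpSet (f '' D) := by
    rw [hfd]
    have := perpSet_sub_mem hxP hx'P
    simpa using this
  have hf0 : f (x - x') = 0 := by
    have := hperp _ hmem
    simpa using inner_self_eq_zero.mp this
  have hker : x - x' ∈ {z : H | z ∈ D ∧ f z = 0} := ⟨hsub.sub_mem' hxD hx'D, hf0⟩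
  have hNp : x - x' ∈ nullPerp D f := perpSet_sub_mem hxN hx'N
  have := hNp _ hker
  have h0 : x - x' = 0 := by simpa using inner_self_eq_zero.mp this
  exact sub_eq_zero.mp h0

lemma pinv_spec (hsub : IsLinSubspace D) (hanti : AntilinearOn D f) {y x : H}
    (h1 : x ∈ D ∧ x ∈ nullPerp D f ∧ f x - y ∈ perpSet (f '' D)) :
    pinvFun D f y = x := by
  have hex : ∃ z, z ∈ D ∧ z ∈ nullPerp D f ∧ f z - y ∈ perpSet (f '' D) := ⟨x, h1⟩
  rw [pinvFun, dif_pos hex]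
  exact pinv_uniq hsub hanti hex.choose_spec h1

lemma good_preimage (hsub : IsLinSubspace D) (hanti : AntilinearOn D f)
    (hclosed : HasClosedGraph D f) {r : H} (hr : r ∈ f '' D) :
    ∃ m, m ∈ D ∧ m ∈ nullPerp D f ∧ f m = r := by
  haveI : CompleteSpace ↥(kerSub hsub hanti) :=
    (kerSub_isClosed hsub hanti hclosed).completeSpace_coe
  haveI : Submodule.HasOrthogonalProjection (kerSub hsub hanti) :=
    Submodule.HasOrthogonalProjection.ofCompleteSpace _
  obtain ⟨x, hx, rfl⟩ := hr
  set N := kerSub hsub hanti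
  set p := N.starProjection x with hp
  have hpN : p ∈ N := (N.orthogonalProjectionOnto x).2
  refine ⟨x - p, hsub.sub_mem' hx hpN.1, ?_, ?_⟩
  · rw [nullPerp_eq hsub hanti]
    exact Submodule.sub_starProjection_mem_orthogonal x
  · rw [hanti.map_sub hsub hx hpN.1, hpN.2, sub_zero]

lemma pinvFun_apply (hsub : IsLinSubspace D) (hanti : AntilinearOn D f)
    (hclosed : HasClosedGraph D f) (hrange : IsClosed (f '' D)) (y : H) :
    pinvFun D f y ∈ D ∧ pinvFun D f y ∈ nullPerp D f ∧
      f (pinvFun D f y) - y ∈ perpSet (f '' D) := by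
  haveI : CompleteSpace ↥(ranSub hsub hanti) := hrange.completeSpace_coe
  haveI : Submodule.HasOrthogonalProjection (ranSub hsub hanti) :=
    Submodule.HasOrthogonalProjection.ofCompleteSpace _
  set R := ranSub hsub hanti
  have hrR : R.starProjection y ∈ f '' D := (R.orthogonalProjectionOnto y).2
  obtain ⟨m, hmD, hmN, hmf⟩ := good_preimage hsub hanti hclosed hrR
  have hperp : f m - y ∈ perpSet (f '' D) := by
    rw [hmf, perpRan_eq hsub hanti]
    have := Submodule.sub_starProjection_mem_orthogonal (K := R) y
    simpa using Rᗮ.neg_mem this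
  have hex : ∃ z, z ∈ D ∧ z ∈ nullPerp D f ∧ f z - y ∈ perpSet (f '' D) :=
    ⟨m, hmD, hmN, hperp⟩
  rw [pinvFun, dif_pos hex]
  exact hex.choose_spec

lemma pinvDom_univ (hsub : IsLinSubspace D) (hanti : AntilinearOn D f)
    (hrange : IsClosed (f '' D)) (y : H) : y ∈ pinvDom D f := by
  haveI : CompleteSpace ↥(ranSub hsub hanti) := hrange.completeSpace_coe
  haveI : Submodule.HasOrthogonalProjection (ranSub hsub hanti) :=
    Submodule.HasOrthogonalProjection.ofCompleteSpace _
  set R := ranSub hsub hanti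
  refine ⟨R.starProjection y, (R.orthogonalProjectionOnto y).2,
    y - R.starProjection y, ?_, by abel⟩
  rw [perpRan_eq hsub hanti]
  exact Submodule.sub_starProjection_mem_orthogonal y

lemma pinv_on_range (hsub : IsLinSubspace D) (hanti : AntilinearOn D f)
    (hclosed : HasClosedGraph D f) {x : H} (hx : x ∈ D) :
    pinvFun D f (f x) ∈ D ∧ pinvFun D f (f x) ∈ nullPerp D f ∧
      x - pinvFun D f (f x) ∈ {z : H | z ∈ D ∧ f z = 0} := by
  haveI : CompleteSpace ↥(kerSub hsub hanti) :=
    (kerSub_isClosed hsub hanti hclosed).completeSpace_coe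
  haveI : Submodule.HasOrthogonalProjection (kerSub hsub hanti) :=
    Submodule.HasOrthogonalProjection.ofCompleteSpace _
  set N := kerSub hsub hanti
  set p := N.starProjection x with hp
  have hpN : p ∈ N := (N.orthogonalProjectionOnto x).2
  have heq : pinvFun D f (f x) = x - p := by
    refine pinv_spec hsub hanti ⟨hsub.sub_mem' hx hpN.1, ?_, ?_⟩
    · rw [nullPerp_eq hsub hanti]
      exact Submodule.sub_starProjection_mem_orthogonal x
    · rw [hanti.map_sub hsub hx hpN.1, hpN.2, sub_zero, sub_self]
      exact perpSet_zero_mem _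
  rw [heq]
  refine ⟨hsub.sub_mem' hx hpN.1, ?_, by simpa using (show p ∈ D ∧ f p = 0 from hpN)⟩
  rw [nullPerp_eq hsub hanti]
  exact Submodule.sub_starProjection_mem_orthogonal x

/-- On the range, `f ∘ pinvFun = id`. -/
lemma f_pinv_of_mem_range (hsub : IsLinSubspace D) (hanti : AntilinearOn D f)
    (hclosed : HasClosedGraph D f) (hrange : IsClosed (f '' D)) {r : H} (hr : r ∈ f '' D) :
    f (pinvFun D f r) = r := by
  obtain ⟨hD, hN, hP⟩ := pinvFun_apply hsub hanti hclosed hrange r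
  have hmem : f (pinvFun D f r) - r ∈ f '' D := by
    have h1 : f (pinvFun D f r) ∈ ranSub hsub hanti := ⟨_, hD, rfl⟩
    have h2 : r ∈ ranSub hsub hanti := hr
    exact (ranSub hsub hanti).sub_mem h1 h2
  have := hP _ hmem
  have h0 : f (pinvFun D f r) - r = 0 := by simpa using inner_self_eq_zero.mp this
  exact sub_eq_zero.mp h0

end Pinv

section Sharp

variable {D : Set H} {f : H → H}

lemma pinv_add (hsub : IsLinSubspace D) (hanti : AntilinearOn D f)
    (hclosed : HasClosedGraph D f) (hrange : IsClosed (f '' D)) (y y' : H) :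
    pinvFun D f (y + y') = pinvFun D f y + pinvFun D f y' := by
  obtain ⟨h1, h2, h3⟩ := pinvFun_apply hsub hanti hclosed hrange y
  obtain ⟨h1', h2', h3'⟩ := pinvFun_apply hsub hanti hclosed hrange y'
  refine pinv_spec hsub hanti ⟨hsub.add_mem' h1 h1', perpSet_add_mem h2 h2', ?_⟩
  rw [hanti.map_add hsub h1 h1']
  have := perpSet_add_mem h3 h3'
  have heq : f (pinvFun D f y) - y + (f (pinvFun D f y') - y')
      = f (pinvFun D f y) + f (pinvFun D f y') - (y + y') := by abel
  rwa [heq] at this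

lemma pinv_smul (hsub : IsLinSubspace D) (hanti : AntilinearOn D f)
    (hclosed : HasClosedGraph D f) (hrange : IsClosed (f '' D)) (a : ℂ) (y : H) :
    pinvFun D f (a • y) = (starRingEnd ℂ a) • pinvFun D f y := by
  obtain ⟨h1, h2, h3⟩ := pinvFun_apply hsub hanti hclosed hrange y
  refine pinv_spec hsub hanti ⟨hsub.smul_mem' _ h1, perpSet_smul_mem _ h2, ?_⟩
  rw [hanti.map_smul hsub _ h1]
  have := perpSet_smul_mem a h3
  have heq : a • (f (pinvFun D f y) - y)
      = (starRingEnd ℂ (starRingEnd ℂ a)) • f (pinvFun D f y) - a • y := by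
    simp [smul_sub]
  rwa [heq] at this

/-- The pseudoinverse restricted to the range, as a real-linear map. -/
def pinvL (hsub : IsLinSubspace D) (hanti : AntilinearOn D f)
    (hclosed : HasClosedGraph D f) (hrange : IsClosed (f '' D)) :
    ↥(ranSub hsub hanti) →ₗ[ℝ] H where
  toFun r := pinvFun D f (r : H)
  map_add' r r' := pinv_add hsub hanti hclosed hrange r r'
  map_smul' c r := by
    have := pinv_smul hsub hanti hclosed hrange (c : ℂ) (r : H)
    simp only [RingHom.id_apply]
    have hc : ((c • r : ↥(ranSub hsub hanti)) : H) = ((c : ℂ)) • (r : H) := by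
      norm_num [Submodule.coe_smul_of_tower, Complex.coe_smul]
    rw [hc, this, Complex.conj_ofReal, ← Complex.coe_smul]

lemma pinvL_continuous (hsub : IsLinSubspace D) (hanti : AntilinearOn D f)
    (hclosed : HasClosedGraph D f) (hrange : IsClosed (f '' D)) :
    Continuous (pinvL hsub hanti hclosed hrange) := by
  haveI : CompleteSpace ↥(ranSub hsub hanti) := hrange.completeSpace_coe
  apply LinearMap.continuous_of_isClosed_graph
  have hgr : ((pinvL hsub hanti hclosed hrange).graph : Set (↥(ranSub hsub hanti) × H))
      = {p : ↥(ranSub hsub hanti) × H | (p.2, ((p.1 : H))) ∈ {q : H × H | q.1 ∈ D ∧ f q.1 = q.2}}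
        ∩ {p : ↥(ranSub hsub hanti) × H | p.2 ∈ nullPerp D f} := by
    ext ⟨r, x⟩
    simp only [LinearMap.mem_graph_iff, Set.mem_inter_iff, Set.mem_setOf_eq, SetLike.mem_coe]
    constructor
    · rintro rfl
      obtain ⟨h1, h2, _⟩ := pinvFun_apply hsub hanti hclosed hrange (r : H)
      exact ⟨⟨h1, f_pinv_of_mem_range hsub hanti hclosed hrange r.2⟩, h2⟩
    · rintro ⟨⟨hxD, hfx⟩, hxN⟩
      exact (pinv_spec hsub hanti ⟨hxD, hxN, by rw [hfx, sub_self]; exact perpSet_zero_mem _⟩).symm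
  rw [hgr]
  refine IsClosed.inter ?_ ?_
  · exact hclosed.preimage (by fun_prop)
  · have : IsClosed (nullPerp D f) := by
      rw [nullPerp_eq hsub hanti]
      exact Submodule.isClosed_orthogonal _
    exact this.preimage continuous_snd

end Sharp

section SharpRange

variable {D : Set H} {f : H → H}

lemma sharpFun_eq (hdense : Dense D) {y u : H}
    (hu : ∀ x ∈ D, (starRingEnd ℂ) (inner ℂ (f x) y : ℂ) = inner ℂ x u) :
    sharpFun D f y = u := by
  have hex : ∃ u' : H, ∀ x ∈ D, (starRingEnd ℂ) (inner ℂ (f x) y : ℂ) = inner ℂ x u' := ⟨u, hu⟩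
  rw [sharpFun, dif_pos hex]
  have hspec := hex.choose_spec
  have hzero : ∀ x ∈ D, (inner ℂ x (hex.choose - u) : ℂ) = 0 := fun x hx => by
    rw [inner_sub_right, ← hspec x hx, ← hu x hx, sub_self]
  have := dense_inner_zero hdense hzero
  exact sub_eq_zero.mp this

lemma mem_sharpDom_spec (hdense : Dense D) {y : H} (hy : y ∈ sharpDom D f) :
    ∀ x ∈ D, (starRingEnd ℂ) (inner ℂ (f x) y : ℂ) = inner ℂ x (sharpFun D f y) := by
  obtain ⟨u, hu⟩ := hy
  rw [sharpFun_eq hdense hu]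
  exact hu

lemma sharp_range (hsub : IsLinSubspace D) (hanti : AntilinearOn D f) (hdense : Dense D)
    (hclosed : HasClosedGraph D f) (hrange : IsClosed (f '' D)) :
    sharpFun D f '' sharpDom D f = nullPerp D f := by
  apply Set.Subset.antisymm
  · rintro _ ⟨y, hy, rfl⟩
    intro z hz
    have := mem_sharpDom_spec hdense hy z hz.1
    rw [← this, hz.2]
    simp
  · intro u hu
    haveI : CompleteSpace ↥(ranSub hsub hanti) := hrange.completeSpace_coe
    set R := ranSub hsub hanti with hR
    have hcont : Continuous fun r : ↥R => (inner ℂ (pinvFun D f (r : H)) u : ℂ) := by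
      have : Continuous fun r : ↥R => pinvFun D f (r : H) :=
        pinvL_continuous hsub hanti hclosed hrange
      exact Continuous.inner this continuous_const
    let φlin : ↥R →ₗ[ℂ] ℂ :=
      { toFun := fun r => (inner ℂ (pinvFun D f (r : H)) u : ℂ)
        map_add' := fun r r' => by
          rw [Submodule.coe_add, pinv_add hsub hanti hclosed hrange, inner_add_left]
        map_smul' := fun a r => by
          simp only [RingHom.id_apply, Submodule.coe_smul]
          rw [pinv_smul hsub hanti hclosed hrange, inner_smul_left]
          simp [smul_eq_mul] }
    let φ : ↥R →L[ℂ] ℂ := ⟨φlin, hcont⟩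
    set y : ↥R := (InnerProductSpace.toDual ℂ ↥R).symm φ with hy
    have hyr : ∀ r : ↥R, (inner ℂ ((y : H)) ((r : H)) : ℂ) = inner ℂ (pinvFun D f (r : H)) u := by
      intro r
      rw [← Submodule.coe_inner]
      exact InnerProductSpace.toDual_symm_apply
    have key : ∀ x ∈ D, (starRingEnd ℂ) (inner ℂ (f x) ((y : H)) : ℂ) = (inner ℂ x u : ℂ) := by
      intro x hx
      have hfx : f x ∈ R := ⟨x, hx, rfl⟩
      have h1 : (starRingEnd ℂ) (inner ℂ (f x) ((y : H)) : ℂ) = inner ℂ ((y : H)) (f x) :=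
        inner_conj_symm _ _
      have h2 := hyr ⟨f x, hfx⟩
      obtain ⟨_, _, hker⟩ := pinv_on_range hsub hanti hclosed hx
      have h3 : (inner ℂ (x - pinvFun D f (f x)) u : ℂ) = 0 := hu _ hker
      rw [inner_sub_left, sub_eq_zero] at h3
      rw [h1, h2, ← h3]
    exact ⟨(y : H), ⟨u, key⟩, sharpFun_eq hdense key⟩

lemma submodule_eq_of_proj_eq (hdense : Dense D) {U V : Submodule ℂ H}
    (hU : IsClosed (U : Set H)) (hV : IsClosed (V : Set H))
    (h : ∀ x ∈ D, (haveI : CompleteSpace ↥U := hU.completeSpace_coe;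
        U.starProjection x) =
      (haveI : CompleteSpace ↥V := hV.completeSpace_coe; V.starProjection x)) :
    U = V := by
  haveI : CompleteSpace ↥U := hU.completeSpace_coe
  haveI : CompleteSpace ↥V := hV.completeSpace_coe
  have hfun : (fun x : H => U.starProjection x)
      = fun x : H => V.starProjection x := by
    refine Continuous.ext_on hdense ?_ ?_ h
    · exact U.starProjection.continuous
    · exact V.starProjection.continuous
  ext x
  rw [← Submodule.starProjection_eq_self_iff (K := U), ← Submodule.starProjection_eq_self_iff (K := V)]
  rw [congrFun hfun x]

end SharpRange

/-- Let `T = (D, f)` be a densely defined closed antilinear operator on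
`H` with closed range.  Then `R(T) = R(T^♯)` iff `T†T ⊂ TT†` (inclusion of graphs, i.e.
`TT†` extends `T†T`). -/
theorem range_eq_range_sharp_iff_pinv_commute
    (D : Set H) (f : H → H)
    (hsub : IsLinSubspace D) (hanti : AntilinearOn D f) (hdense : Dense D)
    (hclosed : HasClosedGraph D f) (hrange : IsClosed (f '' D)) :
    (f '' D = sharpFun D f '' sharpDom D f) ↔
    (∀ x : H, x ∈ D → f x ∈ pinvDom D f →
      x ∈ pinvDom D f ∧ pinvFun D f x ∈ D ∧
        f (pinvFun D f x) = pinvFun D f (f x)) := by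
  rw [sharp_range hsub hanti hdense hclosed hrange]
  haveI : CompleteSpace ↥(ranSub hsub hanti) := hrange.completeSpace_coe
  haveI : CompleteSpace ↥(kerSub hsub hanti) :=
    (kerSub_isClosed hsub hanti hclosed).completeSpace_coe
  set R := ranSub hsub hanti with hR
  set N := kerSub hsub hanti with hN
  constructor
  · -- range = nullPerp  →  T†T ⊆ TT†
    intro h x hx _hfx
    have hRN : (R : Set H) = (Nᗮ : Set H) := by
      rw [← nullPerp_eq hsub hanti]; exact h
    obtain ⟨hmD, hmN, hker⟩ := pinv_on_range hsub hanti hclosed hx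
    set m := pinvFun D f (f x) with hm
    -- m ∈ range
    have hmR : m ∈ f '' D := by
      have : m ∈ (Nᗮ : Set H) := by rw [← nullPerp_eq hsub hanti]; exact hmN
      rw [← hRN] at this; exact this
    set x₀ := pinvFun D f m with hx₀
    obtain ⟨hx₀D, hx₀N, _⟩ := pinvFun_apply hsub hanti hclosed hrange m
    have hfx₀ : f x₀ = m := f_pinv_of_mem_range hsub hanti hclosed hrange hmR
    have hNleRperp : (N : Submodule ℂ H) ≤ Rᗮ := by
      have h1 : R = Nᗮ := SetLike.ext' hRN
      rw [h1]
      exact N.le_orthogonal_orthogonal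
    have hpx : pinvFun D f x = x₀ := by
      refine pinv_spec hsub hanti ⟨hx₀D, hx₀N, ?_⟩
      rw [hfx₀, perpRan_eq hsub hanti]
      have : x - m ∈ Rᗮ := hNleRperp hker
      simpa using Rᗮ.neg_mem this
    refine ⟨pinvDom_univ hsub hanti hrange x, ?_, ?_⟩
    · rw [hpx]; exact hx₀D
    · rw [hpx, hfx₀]
  · -- T†T ⊆ TT†  →  range = nullPerp
    intro h
    have key : R = Nᗮ := by
      refine submodule_eq_of_proj_eq hdense hrange (Submodule.isClosed_orthogonal _) ?_
      intro x hx
      obtain ⟨_, hD, hcomm⟩ := h x hx (pinvDom_univ hsub hanti hrange (f x))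
      obtain ⟨hpD, hpN, hpP⟩ := pinvFun_apply hsub hanti hclosed hrange x
      obtain ⟨hmD, hmN, hker⟩ := pinv_on_range hsub hanti hclosed hx
      have h1 : R.starProjection x = f (pinvFun D f x) := by
        refine Submodule.eq_starProjection_of_mem_orthogonal ⟨_, hpD, rfl⟩ ?_
        rw [perpRan_eq hsub hanti] at hpP
        have := Rᗮ.neg_mem hpP
        simpa using this
      have h2 : Nᗮ.starProjection x = pinvFun D f (f x) := by
        refine Submodule.eq_starProjection_of_mem_orthogonal ?_ ?_
        · rw [nullPerp_eq hsub hanti] at hmN; exact hmN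
        · exact N.le_orthogonal_orthogonal hker
      rw [h1, h2, hcomm]
    rw [nullPerp_eq hsub hanti, ← key]
    rfl
end
end

section
/- Let A: D(A)⊂H→H, B: D(B)⊂K→H, F: D(F)⊂H→K, E: D(E)⊂K→K be antilinear operators with D(A) ⊂ D(F), μ ∈ ρ(A) (so (A−μ)^{-1} is a bounded real-linear bijection), (A−μ)^{-1}B bounded on D(B), and F(A−μ)^{-1} closed on H. Then the block operator matrix 𝒜 = [[A, B],[F, E]] on D(𝒜) = (D(A)∩D(F)) ⊕ (D(B)∩D(E)) is closable if and only if the Schur complement S₂(μ) = E − μ − F(A−μ)^{-1}B is closable. -/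
open Classical
noncomputable section

variable {H K : Type*}
  [NormedAddCommGroup H] [InnerProductSpace ℂ H] [CompleteSpace H]
  [NormedAddCommGroup K] [InnerProductSpace ℂ K] [CompleteSpace K]

/-- An operator `(D, f)` between normed groups is closable: if `(0, y)` is in the closure
of its graph then `y = 0`. (For additive — in particular antilinear — operators this is the
standard characterization of closability.) -/
def Closable {E F : Type*} [NormedAddCommGroup E] [NormedAddCommGroup F]
    (D : Set E) (f : E → F) : Prop :=
  ∀ y : F, ((0 : E), y) ∈ closure {p : E × F | p.1 ∈ D ∧ f p.1 = p.2} → y = 0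

/-- Let `A, B, F, E` be antilinear operators (`A` on `H`, `E` on `K`,
`B : K → H`, `F : H → K`) with `D(A) ⊆ D(F)`, let `μ ∈ ρ(A)` with bounded real-linear
resolvent `Ainv = (A − μ)⁻¹`, suppose `(A − μ)⁻¹B` is bounded on `D(B)` and `F(A − μ)⁻¹` is
closed on `H`.  Then the block operator matrix `𝒜 = [[A, B], [F, E]]` on
`(D(A) ∩ D(F)) ⊕ (D(B) ∩ D(E))` is closable iff the Schur complement
`S₂(μ) = E − μ − F(A − μ)⁻¹B` (domain `D(B) ∩ D(E)`) is closable. -/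
theorem blockMatrix_closable_iff_schur_closable
    (DA : Set H) (fA : H → H) (DB : Set K) (fB : K → H)
    (DF : Set H) (fF : H → K) (DE : Set K) (fE : K → K)
    (hsubA : IsLinSubspace DA) (hsubB : IsLinSubspace DB)
    (hsubF : IsLinSubspace DF) (hsubE : IsLinSubspace DE)
    (hantiA : AntilinearOn DA fA) (hantiB : AntilinearOn DB fB)
    (hantiF : AntilinearOn DF fF) (hantiE : AntilinearOn DE fE)
    (hAF : DA ⊆ DF)
    (μ : ℂ) (Ainv : H → H)
    -- `μ ∈ ρ(A)`: `A − μ` is a bijection from `D(A)` onto `H` with bounded inverse `Ainv`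
    (hAinv_mem : ∀ y : H, Ainv y ∈ DA)
    (hAinv_right : ∀ y : H, fA (Ainv y) - μ • Ainv y = y)
    (hAinv_left : ∀ x ∈ DA, Ainv (fA x - μ • x) = x)
    (hAinv_bdd : ∃ c : ℝ, ∀ y : H, ‖Ainv y‖ ≤ c * ‖y‖)
    -- `(A − μ)⁻¹ B` is bounded on `D(B)`
    (hAinvB_bdd : ∃ c : ℝ, ∀ y ∈ DB, ‖Ainv (fB y)‖ ≤ c * ‖y‖)
    -- `F (A − μ)⁻¹` (everywhere defined since `D(A) ⊆ D(F)`) is closed on `H`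
    (hFAinv_closed : IsClosed {p : H × K | fF (Ainv p.1) = p.2}) :
    Closable {p : H × K | p.1 ∈ DA ∩ DF ∧ p.2 ∈ DB ∩ DE}
        (fun p => (fA p.1 + fB p.2, fF p.1 + fE p.2)) ↔
      Closable (DB ∩ DE) (fun y => fE y - μ • y - fF (Ainv (fB y))) := by
  obtain ⟨hDA0, hDA⟩ := hsubA
  obtain ⟨hDF0, hDF⟩ := hsubF
  -- membership helpers
  have memDA_add : ∀ x ∈ DA, ∀ y ∈ DA, x + y ∈ DA := fun x hx y hy => by
    simpa using hDA 1 x y hx hy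
  have memDA_neg : ∀ x ∈ DA, -x ∈ DA := fun x hx => by
    simpa using hDA (-1) x 0 hx hDA0
  -- antilinearity helpers
  have fA_zero : fA 0 = 0 := by
    have h := hantiA 1 0 0 hDA0 hDA0
    simpa using h
  have fF_zero : fF 0 = 0 := by
    have h := hantiF 1 0 0 hDF0 hDF0
    simpa using h
  have fA_add : ∀ x ∈ DA, ∀ y ∈ DA, fA (x + y) = fA x + fA y := fun x hx y hy => by
    simpa using hantiA 1 x y hx hy
  have fF_add : ∀ x ∈ DF, ∀ y ∈ DF, fF (x + y) = fF x + fF y := fun x hx y hy => by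
    simpa using hantiF 1 x y hx hy
  have fA_neg : ∀ x ∈ DA, fA (-x) = -fA x := fun x hx => by
    have h := hantiA (-1) x 0 hx hDA0
    simpa [fA_zero] using h
  have fF_neg : ∀ x ∈ DF, fF (-x) = -fF x := fun x hx => by
    have h := hantiF (-1) x 0 hx hDF0
    simpa [fF_zero] using h
  have fA_rsmul : ∀ (r : ℝ), ∀ x ∈ DA, fA (r • x) = r • fA x := fun r x hx => by
    have h := hantiA (r : ℂ) x 0 hx hDA0
    have h2 : ((r : ℂ)) • x = r • x := by
      rw [← Complex.coe_algebraMap, algebraMap_smul]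
    have h3 : ((starRingEnd ℂ) (r : ℂ)) • fA x = r • fA x := by
      rw [Complex.conj_ofReal, ← Complex.coe_algebraMap, algebraMap_smul]
    simpa [h2, h3, fA_zero] using h
  have fF_rsmul : ∀ (r : ℝ), ∀ x ∈ DF, fF (r • x) = r • fF x := fun r x hx => by
    have h := hantiF (r : ℂ) x 0 hx hDF0
    have h2 : ((r : ℂ)) • x = r • x := by
      rw [← Complex.coe_algebraMap, algebraMap_smul]
    have h3 : ((starRingEnd ℂ) (r : ℂ)) • fF x = r • fF x := by
      rw [Complex.conj_ofReal, ← Complex.coe_algebraMap, algebraMap_smul]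
    simpa [h2, h3, fF_zero] using h
  have memDA_rsmul : ∀ (r : ℝ), ∀ x ∈ DA, r • x ∈ DA := fun r x hx => by
    have h := hDA (r : ℂ) x 0 hx hDA0
    have h2 : ((r : ℂ)) • x = r • x := by
      rw [← Complex.coe_algebraMap, algebraMap_smul]
    simpa [h2] using h
  -- `Ainv` helpers
  have Ainv_eq : ∀ x ∈ DA, ∀ z : H, fA x - μ • x = z → Ainv z = x := by
    intro x hx z hz
    rw [← hz]
    exact hAinv_left x hx
  have Ainv_zero : Ainv 0 = 0 := Ainv_eq 0 hDA0 0 (by simp [fA_zero])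
  have Ainv_add : ∀ p q : H, Ainv (p + q) = Ainv p + Ainv q := by
    intro p q
    refine Ainv_eq _ (memDA_add _ (hAinv_mem p) _ (hAinv_mem q)) _ ?_
    rw [fA_add _ (hAinv_mem p) _ (hAinv_mem q), smul_add]
    have hpq : (fA (Ainv p) - μ • Ainv p) + (fA (Ainv q) - μ • Ainv q) = p + q := by
      rw [hAinv_right p, hAinv_right q]
    rw [← hpq]
    abel
  have Ainv_rsmul : ∀ (r : ℝ) (p : H), Ainv (r • p) = r • Ainv p := by
    intro r p
    refine Ainv_eq _ (memDA_rsmul r _ (hAinv_mem p)) _ ?_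
    rw [fA_rsmul r _ (hAinv_mem p), smul_comm μ r (Ainv p), ← smul_sub, hAinv_right p]
  -- `Ainv` as a continuous real-linear map
  obtain ⟨c, hc⟩ := hAinv_bdd
  let AinvL : H →ₗ[ℝ] H :=
    { toFun := Ainv, map_add' := Ainv_add, map_smul' := Ainv_rsmul }
  have Ainv_cont : Continuous Ainv := by
    have := (AinvL.mkContinuous c hc).continuous
    exact this
  -- `F (A - μ)⁻¹` as a continuous real-linear map (closed graph theorem)
  let gL : H →ₗ[ℝ] K :=
    { toFun := fun z => fF (Ainv z)
      map_add' := fun p q => by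
        show fF (Ainv (p + q)) = fF (Ainv p) + fF (Ainv q)
        rw [Ainv_add, fF_add _ (hAF (hAinv_mem p)) _ (hAF (hAinv_mem q))]
      map_smul' := fun r p => by
        show fF (Ainv (r • p)) = r • fF (Ainv p)
        rw [Ainv_rsmul, fF_rsmul r _ (hAF (hAinv_mem p))] }
  have g_cont : Continuous fun z => fF (Ainv z) := by
    have hgraph : IsClosed (gL.graph : Set (H × K)) := by
      convert hFAinv_closed using 1
      ext p
      simp only [SetLike.mem_coe, LinearMap.mem_graph_iff, Set.mem_setOf_eq]
      constructor <;> intro h <;> exact h.symm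
    exact gL.continuous_of_isClosed_graph hgraph
  obtain ⟨c', hc'⟩ := hAinvB_bdd
  constructor
  · -- `𝒜` closable → Schur complement closable
    intro hA v hv
    obtain ⟨q, hqmem, hqlim⟩ := mem_closure_iff_seq_limit.1 hv
    set y : ℕ → K := fun n => (q n).1 with hy_def
    have hymem : ∀ n, y n ∈ DB ∩ DE := fun n => (hqmem n).1
    have hSval : ∀ n, fE (y n) - μ • y n - fF (Ainv (fB (y n))) = (q n).2 :=
      fun n => (hqmem n).2
    have hy : Filter.Tendsto y Filter.atTop (nhds 0) :=
      (continuous_fst.tendsto ((0 : K), v)).comp hqlim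
    have hS : Filter.Tendsto (fun n => (q n).2) Filter.atTop (nhds v) :=
      (continuous_snd.tendsto ((0 : K), v)).comp hqlim
    set x : ℕ → H := fun n => -Ainv (fB (y n)) with hx_def
    have hxmem : ∀ n, x n ∈ DA := fun n => memDA_neg _ (hAinv_mem _)
    have hx : Filter.Tendsto x Filter.atTop (nhds 0) := by
      have hb : Filter.Tendsto (fun n => c' * ‖y n‖) Filter.atTop (nhds 0) := by
        simpa using hy.norm.const_mul c'
      have := squeeze_zero_norm (f := x)
        (fun n => by simpa [hx_def] using hc' (y n) (hymem n).1) hb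
      exact this
    have key : ((0 : H × K), ((0 : H), v)) ∈
        closure {p : (H × K) × (H × K) | (p.1.1 ∈ DA ∩ DF ∧ p.1.2 ∈ DB ∩ DE) ∧
          (fA p.1.1 + fB p.1.2, fF p.1.1 + fE p.1.2) = p.2} := by
      apply mem_closure_iff_seq_limit.2
      refine ⟨fun n => ((x n, y n), (μ • x n, (q n).2 + μ • y n)), fun n => ?_, ?_⟩
      · refine ⟨⟨⟨hxmem n, hAF (hxmem n)⟩, hymem n⟩, ?_⟩
        have hw : fA (Ainv (fB (y n))) = fB (y n) + μ • Ainv (fB (y n)) :=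
          sub_eq_iff_eq_add.mp (hAinv_right _)
        have h1 : fA (x n) + fB (y n) = μ • x n := by
          rw [hx_def]
          simp only []
          rw [fA_neg _ (hAinv_mem _), hw, smul_neg]
          abel
        have h2 : fF (x n) + fE (y n) = (q n).2 + μ • y n := by
          rw [← hSval n, hx_def]
          simp only []
          rw [fF_neg _ (hAF (hAinv_mem _))]
          abel
        rw [h1, h2]
      · have h1 : Filter.Tendsto (fun n => (x n, y n)) Filter.atTop
            (nhds ((0 : H), (0 : K))) := hx.prodMk_nhds hy
        have h2 : Filter.Tendsto (fun n => (μ • x n, (q n).2 + μ • y n)) Filter.atTop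
            (nhds ((0 : H), v)) := by
          have ha : Filter.Tendsto (fun n => μ • x n) Filter.atTop (nhds 0) := by
            simpa using hx.const_smul μ
          have hb : Filter.Tendsto (fun n => (q n).2 + μ • y n) Filter.atTop (nhds v) := by
            simpa using hS.add (hy.const_smul μ)
          exact ha.prodMk_nhds hb
        exact h1.prodMk_nhds h2
    have := hA ((0 : H), v) key
    have hv2 : v = 0 := congrArg Prod.snd this
    exact hv2
  · -- Schur complement closable → `𝒜` closable
    intro hS uv huv
    obtain ⟨q, hqmem, hqlim⟩ := mem_closure_iff_seq_limit.1 huv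
    set x : ℕ → H := fun n => (q n).1.1 with hx_def
    set y : ℕ → K := fun n => (q n).1.2 with hy_def
    have hxmem : ∀ n, x n ∈ DA := fun n => (hqmem n).1.1.1
    have hymem : ∀ n, y n ∈ DB ∩ DE := fun n => (hqmem n).1.2
    have haval : ∀ n, fA (x n) + fB (y n) = (q n).2.1 :=
      fun n => congrArg Prod.fst (hqmem n).2
    have hbval : ∀ n, fF (x n) + fE (y n) = (q n).2.2 :=
      fun n => congrArg Prod.snd (hqmem n).2
    have hx : Filter.Tendsto x Filter.atTop (nhds 0) :=
      ((continuous_fst.comp continuous_fst).tendsto ((0 : H × K), uv)).comp hqlim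
    have hy : Filter.Tendsto y Filter.atTop (nhds 0) :=
      ((continuous_snd.comp continuous_fst).tendsto ((0 : H × K), uv)).comp hqlim
    have ha : Filter.Tendsto (fun n => fA (x n) + fB (y n)) Filter.atTop (nhds uv.1) := by
      have := ((continuous_fst.comp continuous_snd).tendsto ((0 : H × K), uv)).comp hqlim
      exact this.congr fun n => (haval n).symm
    have hb : Filter.Tendsto (fun n => fF (x n) + fE (y n)) Filter.atTop (nhds uv.2) := by
      have := ((continuous_snd.comp continuous_snd).tendsto ((0 : H × K), uv)).comp hqlim
      exact this.congr fun n => (hbval n).symm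
    -- the shifted first component
    set w : ℕ → H := fun n => Ainv (fB (y n)) with hw_def
    have hw : Filter.Tendsto w Filter.atTop (nhds 0) := by
      have hbnd : Filter.Tendsto (fun n => c' * ‖y n‖) Filter.atTop (nhds 0) := by
        simpa using hy.norm.const_mul c'
      exact squeeze_zero_norm (fun n => hc' (y n) (hymem n).1) hbnd
    set x' : ℕ → H := fun n => x n + w n with hx'_def
    have hx'mem : ∀ n, x' n ∈ DA := fun n => memDA_add _ (hxmem n) _ (hAinv_mem _)
    have hx' : Filter.Tendsto x' Filter.atTop (nhds 0) := by
      simpa using hx.add hw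
    set z : ℕ → H := fun n => fA (x n) + fB (y n) - μ • x n with hz_def
    have hz_eq : ∀ n, fA (x' n) - μ • x' n = z n := by
      intro n
      have hwA : fA (w n) = fB (y n) + μ • w n :=
        sub_eq_iff_eq_add.mp (hAinv_right _)
      rw [hx'_def]
      simp only []
      rw [fA_add _ (hxmem n) _ (hAinv_mem _), hwA, smul_add, hz_def]
      abel
    have hz : Filter.Tendsto z Filter.atTop (nhds uv.1) := by
      have := ha.sub (hx.const_smul μ)
      simpa [hz_def] using this
    have hAinvz : ∀ n, Ainv (z n) = x' n := fun n => by
      rw [← hz_eq n]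
      exact hAinv_left _ (hx'mem n)
    -- `uv.1 = 0`
    have hAinv_u : Ainv uv.1 = 0 := by
      have h1 : Filter.Tendsto (fun n => Ainv (z n)) Filter.atTop (nhds (Ainv uv.1)) :=
        (Ainv_cont.tendsto uv.1).comp hz
      have h2 : Filter.Tendsto (fun n => Ainv (z n)) Filter.atTop (nhds 0) := by
        refine hx'.congr fun n => (hAinvz n).symm
      exact tendsto_nhds_unique h1 h2
    have hu : uv.1 = 0 := by
      have := hAinv_right uv.1
      rw [hAinv_u, fA_zero] at this
      simpa using this.symm
    -- `fF (x' n) → 0`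
    have hfFx' : Filter.Tendsto (fun n => fF (x' n)) Filter.atTop (nhds 0) := by
      have h1 : Filter.Tendsto (fun n => fF (Ainv (z n))) Filter.atTop
          (nhds (fF (Ainv uv.1))) := (g_cont.tendsto uv.1).comp hz
      rw [hAinv_u, fF_zero] at h1
      exact h1.congr fun n => by rw [hAinvz n]
    -- the Schur complement values converge to `uv.2`
    have hSy : Filter.Tendsto (fun n => fE (y n) - μ • y n - fF (Ainv (fB (y n))))
        Filter.atTop (nhds uv.2) := by
      have heq : ∀ n, fE (y n) - μ • y n - fF (Ainv (fB (y n))) =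
          (fF (x n) + fE (y n)) - μ • y n - fF (x' n) := by
        intro n
        rw [hx'_def]
        simp only []
        rw [fF_add _ (hAF (hxmem n)) _ (hAF (hAinv_mem _))]
        abel
      have := (hb.sub (hy.const_smul μ)).sub hfFx'
      have h2 : Filter.Tendsto (fun n => (fF (x n) + fE (y n)) - μ • y n - fF (x' n))
          Filter.atTop (nhds uv.2) := by simpa using this
      exact h2.congr fun n => (heq n).symm
    have hv : uv.2 = 0 := by
      apply hS
      apply mem_closure_iff_seq_limit.2
      refine ⟨fun n => (y n, fE (y n) - μ • y n - fF (Ainv (fB (y n)))),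
        fun n => ⟨hymem n, rfl⟩, ?_⟩
      exact hy.prodMk_nhds hSy
    have : uv = ((0 : H), (0 : K)) := Prod.ext hu hv
    exact this
end
end
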